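/- arXiv:1712.08957 — 5 statements merged into one kernel-verified Lean document; each statement's English description precedes it below -/
import Mathlib

section
/- For every β ≥ 0 and u ∈ ℝ, the limit lim_{n→∞} (1/n)·log Z_n^{Det}(β,u) exists and equals max{βu + log d₁, log d}; consequently, for every β > 0, inf{u ∈ ℝ : max{βu + log d₁, log d} > log d} = log(d/d₁)/β. (Theorem 1.1: free energy and critical curve of the directed polymer on a non-disordered d-ary tree with a defect d₁-ary subtree.) -/
open Filter


lemma tw_len_ge_iff {α : Type*} (p : α → Bool) :
    ∀ (l : List α) (k : ℕ), k ≤ l.length →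
      (k ≤ (l.takeWhile p).length ↔ ∀ x ∈ l.take k, p x) := by
  intro l
  induction l with
  | nil =>
    intro k hk
    simp only [List.length_nil, Nat.le_zero] at hk
    subst hk; simp
  | cons a l ih =>
    intro k hk
    cases k with
    | zero => simp
    | succ k =>
      rw [List.takeWhile_cons, List.take_succ_cons]
      by_cases hpa : p a = true
      · simp only [hpa, if_true, List.length_cons, Nat.succ_le_succ_iff,
          List.mem_cons, forall_eq_or_imp, ih k (by simpa using hk)]
        simp [hpa]
      · rw [if_neg hpa]
        simp only [List.length_nil]
        constructor
        · omega
        · intro h; exact absurd (h a List.mem_cons_self) hpa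

lemma K_ge_iff {d d₁ n k : ℕ} (hk : k ≤ n) (w : Fin n → Fin d) :
    k ≤ ((List.ofFn w).takeWhile (fun a => decide ((a:ℕ) < d₁))).length
      ↔ ∀ i : Fin n, (i:ℕ) < k → (w i : ℕ) < d₁ := by
  have hcast : ((List.ofFn w).takeWhile (fun a => decide ((a : ℕ) < d₁)))
      = (List.ofFn (fun i => ((w i : ℕ)))).takeWhile (fun a => decide (a < d₁)) := by
    congr 1
    simp only [List.pure_def, List.bind_eq_flatMap]
    rw [← List.map_eq_flatMap, List.map_ofFn]
    rfl
  rw [hcast]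
  set l : List ℕ := List.ofFn (fun i => ((w i : ℕ))) with hl
  have hlen : k ≤ l.length := by simpa [hl] using hk
  rw [tw_len_ge_iff (fun a : ℕ => decide (a < d₁)) l k hlen]
  constructor
  · intro H i hi
    have hi' : (i:ℕ) < (l.take k).length := by
      simp only [hl, List.length_take, List.length_ofFn]
      omega
    have := H _ (List.getElem_mem hi')
    rw [List.getElem_take] at this
    simp only [hl, List.getElem_ofFn] at this
    simpa using this
  · intro H x hx
    obtain ⟨j, hj, rfl⟩ := List.mem_iff_getElem.mp hx
    have hjk : j < k := by
      simp only [hl, List.length_take, List.length_ofFn] at hj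
      omega
    have hjn : j < n := lt_of_lt_of_le hjk hk
    rw [List.getElem_take]
    simp only [hl, List.getElem_ofFn]
    simpa using H ⟨j, hjn⟩ hjk

lemma card_filter_fin_lt (m k : ℕ) (h : k ≤ m) :
    ((Finset.univ.filter (fun j : Fin m => (j:ℕ) < k)).card = k) := by
  have : Finset.univ.filter (fun j : Fin m => (j:ℕ) < k)
      = Finset.map (Fin.castLEEmb h) Finset.univ := by
    ext j
    simp only [Finset.mem_filter, Finset.mem_univ, true_and, Finset.mem_map,
      Fin.castLEEmb_apply]
    constructor
    · intro hj; exact ⟨⟨j, hj⟩, rfl⟩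
    · rintro ⟨i, rfl⟩; exact i.2
  rw [this, Finset.card_map, Finset.card_univ, Fintype.card_fin]

lemma count_prefix (d n k : ℕ) (S : Finset (Fin d)) (hk : k ≤ n) :
    (Finset.univ.filter
        (fun w : Fin n → Fin d => ∀ i : Fin n, (i:ℕ) < k → w i ∈ S)).card
      = S.card ^ k * d ^ (n - k) := by
  have hset : Finset.univ.filter
        (fun w : Fin n → Fin d => ∀ i : Fin n, (i:ℕ) < k → w i ∈ S)
      = Fintype.piFinset (fun i : Fin n => if (i:ℕ) < k then S else Finset.univ) := by
    ext w
    simp only [Finset.mem_filter, Finset.mem_univ, true_and, Fintype.mem_piFinset]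
    refine forall_congr' fun i => ?_
    split_ifs with h <;> simp [h]
  rw [hset, Fintype.card_piFinset]
  have : ∀ i : Fin n, (if (i:ℕ) < k then S else (Finset.univ : Finset (Fin d))).card
      = if (i:ℕ) < k then S.card else d := by
    intro i; split_ifs <;> simp
  simp only [this]
  rw [Finset.prod_ite, Finset.prod_const, Finset.prod_const]
  have h1 : (Finset.univ.filter (fun i : Fin n => (i:ℕ) < k)).card = k :=
    card_filter_fin_lt n k hk
  have h2 : (Finset.univ.filter (fun i : Fin n => ¬ (i:ℕ) < k)).card = n - k := by
    have := Finset.card_filter_add_card_filter_not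
      (s := (Finset.univ : Finset (Fin n))) (p := fun i : Fin n => (i:ℕ) < k)
    simp only [Finset.card_univ, Fintype.card_fin] at this
    omega
  rw [h1, h2]

/-- **Theorem 1.1** (free energy and critical curve of the directed polymer on a
non-disordered `d`-ary tree with a defect `d₁`-ary subtree).  Paths of length `n`
are encoded as `w : Fin n → Fin d`; `K(w)` is the number of initial steps of `w`
inside the defect subtree, i.e. the length of the longest prefix all of whose
entries are `< d₁`.  For every `β ≥ 0` and `u ∈ ℝ`, the free energy
`lim (1/n) log Z_n^{Det}(β,u)` exists and equals `max {βu + log d₁, log d}`;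
consequently, for every `β > 0`,
`inf {u : max {βu + log d₁, log d} > log d} = log(d/d₁)/β`. -/
theorem deterministic_tree_free_energy_and_critical_curve
    (d d₁ : ℕ) (hd : 2 ≤ d) (hd₁ : 1 ≤ d₁) (hd₁d : d₁ < d)
    -- the number of steps a path spends in the defect subtree
    (K : ∀ n : ℕ, (Fin n → Fin d) → ℕ)
    (hK : ∀ (n : ℕ) (w : Fin n → Fin d),
      K n w = ((List.ofFn w).takeWhile (fun a => decide ((a : ℕ) < d₁))).length)
    -- the partition function of the deterministic model
    (Z : ℕ → ℝ → ℝ → ℝ)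
    (hZ : ∀ (n : ℕ) (β u : ℝ), Z n β u =
      ∑ w : Fin n → Fin d, Real.exp (β * u * (K n w : ℝ))) :
    (∀ β u : ℝ, 0 ≤ β →
      Filter.Tendsto (fun n : ℕ => (1 / (n : ℝ)) * Real.log (Z n β u)) Filter.atTop
        (nhds (max (β * u + Real.log d₁) (Real.log d)))) ∧
    (∀ β : ℝ, 0 < β →
      sInf {u : ℝ | Real.log d < max (β * u + Real.log d₁) (Real.log d)} =
        Real.log ((d : ℝ) / (d₁ : ℝ)) / β) := by
  have hd0 : (0:ℝ) < d := by exact_mod_cast (by omega : 0 < d)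
  have hd1R : (1:ℝ) ≤ d := by exact_mod_cast le_trans (by norm_num) hd
  have hd₁0 : (0:ℝ) < d₁ := by exact_mod_cast hd₁
  constructor
  · intro β u _
    set A : ℝ := (d₁:ℝ) * Real.exp (β*u) with hA
    set M : ℝ := max A (d:ℝ) with hM
    have hApos : 0 < A := by positivity
    have hdM : (d:ℝ) ≤ M := le_max_right _ _
    have hAM : A ≤ M := le_max_left _ _
    have hMpos : 0 < M := lt_of_lt_of_le hd0 hdM
    -- exp(β u k) = exp(β u)^k
    have hexp : ∀ k : ℕ, Real.exp (β*u*k) = (Real.exp (β*u))^k := by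
      intro k
      rw [show β*u*(k:ℝ) = (k:ℝ)*(β*u) by ring, Real.exp_nat_mul]
    -- K ≤ n
    have hKle : ∀ (n : ℕ) (w : Fin n → Fin d), K n w ≤ n := by
      intro n w
      rw [hK]
      refine le_trans (List.IsPrefix.length_le (List.takeWhile_prefix _)) ?_
      simp [Function.comp_def, List.sum_ofFn]
    have hKge : ∀ (n k : ℕ) (w : Fin n → Fin d), k ≤ n →
        (k ≤ K n w ↔ ∀ i : Fin n, (i:ℕ) < k → (w i:ℕ) < d₁) := by
      intro n k w hk
      rw [hK]
      exact K_ge_iff hk w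
    -- grouping
    have hZsum : ∀ n : ℕ, Z n β u =
        ∑ k ∈ Finset.range (n+1),
          ((Finset.univ.filter fun w : Fin n → Fin d => K n w = k).card : ℝ)
            * Real.exp (β*u*k) := by
      intro n
      rw [hZ]
      have hrw : ∀ w : Fin n → Fin d, Real.exp (β*u*(K n w)) =
          ∑ k ∈ Finset.range (n+1), if K n w = k then Real.exp (β*u*(k:ℕ)) else 0 := by
        intro w
        rw [Finset.sum_ite_eq (Finset.range (n+1)) (K n w)
          (fun k : ℕ => Real.exp (β*u*(k:ℕ)))]
        rw [if_pos (Finset.mem_range.mpr (Nat.lt_succ_of_le (hKle n w)))]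
      simp only [hrw]
      rw [Finset.sum_comm]
      refine Finset.sum_congr rfl fun k _ => ?_
      rw [Finset.sum_ite, Finset.sum_const, Finset.sum_const, smul_zero, add_zero,
        nsmul_eq_mul]
    -- upper bound on fiber cardinalities
    have hNle : ∀ n k : ℕ, k ≤ n →
        ((Finset.univ.filter fun w : Fin n → Fin d => K n w = k).card)
          ≤ d₁^k * d^(n-k) := by
      intro n k hkn
      have hsub : (Finset.univ.filter fun w : Fin n → Fin d => K n w = k)
          ⊆ Finset.univ.filter (fun w : Fin n → Fin d => ∀ i : Fin n, (i:ℕ) < k →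
              w i ∈ Finset.univ.filter (fun j : Fin d => (j:ℕ) < d₁)) := by
        intro w hw
        simp only [Finset.mem_filter, Finset.mem_univ, true_and] at hw ⊢
        intro i hi
        exact (hKge n k w hkn).mp (le_of_eq hw.symm) i hi
      refine le_trans (Finset.card_le_card hsub) ?_
      rw [count_prefix d n k _ hkn, card_filter_fin_lt d d₁ hd₁d.le]
    -- upper bound on Z
    have hub : ∀ n : ℕ, Z n β u ≤ ((n:ℝ)+1) * M^n := by
      intro n
      rw [hZsum n]
      have hterm : ∀ k ∈ Finset.range (n+1),
          ((Finset.univ.filter fun w : Fin n → Fin d => K n w = k).card : ℝ)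
            * Real.exp (β*u*k) ≤ M^n := by
        intro k hk
        rw [Finset.mem_range, Nat.lt_succ_iff] at hk
        have h1 : ((Finset.univ.filter fun w : Fin n → Fin d => K n w = k).card : ℝ)
            ≤ (d₁:ℝ)^k * (d:ℝ)^(n-k) := by
          calc ((Finset.univ.filter fun w : Fin n → Fin d => K n w = k).card : ℝ)
              ≤ ((d₁^k * d^(n-k) : ℕ) : ℝ) := by exact_mod_cast hNle n k hk
            _ = (d₁:ℝ)^k * (d:ℝ)^(n-k) := by push_cast; ring
        calc ((Finset.univ.filter fun w : Fin n → Fin d => K n w = k).card : ℝ)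
              * Real.exp (β*u*k)
            ≤ ((d₁:ℝ)^k * (d:ℝ)^(n-k)) * Real.exp (β*u*k) :=
              mul_le_mul_of_nonneg_right h1 (Real.exp_pos _).le
          _ = A^k * (d:ℝ)^(n-k) := by rw [hexp, hA, mul_pow]; ring
          _ ≤ M^k * M^(n-k) := by
              refine mul_le_mul (pow_le_pow_left₀ hApos.le hAM k)
                (pow_le_pow_left₀ hd0.le hdM _) (by positivity) (by positivity)
          _ = M^n := by rw [← pow_add]; congr 1; omega
      refine le_trans (Finset.sum_le_sum hterm) (le_of_eq ?_)
      rw [Finset.sum_const, Finset.card_range, nsmul_eq_mul]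
      push_cast
      ring
    -- lower bound 1 : A^n ≤ Z n
    have hge1 : ∀ n : ℕ, A^n ≤ Z n β u := by
      intro n
      set S := Finset.univ.filter (fun w : Fin n → Fin d => ∀ i : Fin n, (i:ℕ) < n →
          w i ∈ Finset.univ.filter (fun j : Fin d => (j:ℕ) < d₁)) with hS
      have hcard : S.card = d₁^n := by
        rw [hS, count_prefix d n n _ le_rfl, card_filter_fin_lt d d₁ hd₁d.le]
        simp
      have hKS : ∀ w ∈ S, K n w = n := by
        intro w hw
        refine le_antisymm (hKle n w) ?_
        rw [hKge n n w le_rfl]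
        intro i hi
        rw [hS] at hw
        simp only [Finset.mem_filter, Finset.mem_univ, true_and] at hw
        exact hw i hi
      rw [hZ]
      have hSsum : ∑ w ∈ S, Real.exp (β*u*(K n w)) = A^n := by
        rw [Finset.sum_congr rfl (fun w hw => by rw [hKS w hw])]
        rw [Finset.sum_const, hcard, nsmul_eq_mul, hexp, hA, mul_pow]
        push_cast
        ring
      rw [← hSsum]
      exact Finset.sum_le_sum_of_subset_of_nonneg (Finset.subset_univ S)
        (fun _ _ _ => (Real.exp_pos _).le)
    -- lower bound 2 : d^(n-1) ≤ Z n
    have hge2 : ∀ n : ℕ, 1 ≤ n → (d:ℝ)^(n-1) ≤ Z n β u := by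
      intro n hn
      set c : Fin d := ⟨d₁, hd₁d⟩ with hc
      set S := Finset.univ.filter (fun w : Fin n → Fin d => ∀ i : Fin n, (i:ℕ) < 1 →
          w i ∈ ({c} : Finset (Fin d))) with hS
      have hcard : S.card = d^(n-1) := by
        rw [hS, count_prefix d n 1 _ hn, Finset.card_singleton]
        simp
      have hKS : ∀ w ∈ S, K n w = 0 := by
        intro w hw
        by_contra h
        have h1 : 1 ≤ K n w := Nat.one_le_iff_ne_zero.mpr h
        have h2 := (hKge n 1 w hn).mp h1
        have h0 : (0:ℕ) < n := hn
        have h3 := h2 ⟨0, h0⟩ (by norm_num)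
        rw [hS] at hw
        simp only [Finset.mem_filter, Finset.mem_univ, true_and,
          Finset.mem_singleton] at hw
        have hc0 := hw ⟨0, h0⟩ (by norm_num)
        rw [hc0, hc] at h3
        simp at h3
      rw [hZ]
      have hSsum : ∑ w ∈ S, Real.exp (β*u*(K n w)) = (d:ℝ)^(n-1) := by
        rw [Finset.sum_congr rfl (fun w hw => by rw [hKS w hw])]
        rw [Finset.sum_const, hcard, nsmul_eq_mul]
        push_cast
        simp
      rw [← hSsum]
      exact Finset.sum_le_sum_of_subset_of_nonneg (Finset.subset_univ S)
        (fun _ _ _ => (Real.exp_pos _).le)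
    -- combined lower bound
    have hlb : ∀ n : ℕ, 1 ≤ n → M^n / d ≤ Z n β u := by
      intro n hn
      rcases le_total A (d:ℝ) with h | h
      · rw [hM, max_eq_right h]
        have heq : (d:ℝ)^n / d = (d:ℝ)^(n-1) := by
          rw [div_eq_iff hd0.ne', ← pow_succ]
          congr 1
          omega
        rw [heq]
        exact hge2 n hn
      · rw [hM, max_eq_left h]
        exact le_trans (div_le_self (by positivity) hd1R) (hge1 n)
    have hZpos : ∀ n : ℕ, 1 ≤ n → 0 < Z n β u :=
      fun n hn => lt_of_lt_of_le (by positivity) (hlb n hn)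
    -- identification of the limit
    have hlogA : Real.log A = β*u + Real.log d₁ := by
      rw [hA, Real.log_mul hd₁0.ne' (Real.exp_ne_zero _), Real.log_exp]
      ring
    have hlogM : max (β * u + Real.log d₁) (Real.log d) = Real.log M := by
      rw [hM, ← hlogA]
      rcases le_total A (d:ℝ) with h | h
      · rw [max_eq_right h, max_eq_right (Real.log_le_log hApos h)]
      · rw [max_eq_left h, max_eq_left (Real.log_le_log hd0 h)]
    rw [hlogM]
    -- squeeze
    have hupper : ∀ᶠ n : ℕ in atTop,
        (1/(n:ℝ)) * Real.log (Z n β u) ≤ Real.log M + Real.log ((n:ℝ)+1) / n := by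
      filter_upwards [eventually_ge_atTop 1] with n hn
      have hn0 : (0:ℝ) < n := by exact_mod_cast hn
      have h1 : Real.log (Z n β u) ≤ Real.log (((n:ℝ)+1) * M^n) :=
        Real.log_le_log (hZpos n hn) (hub n)
      rw [Real.log_mul (by positivity) (by positivity), Real.log_pow] at h1
      refine le_trans (mul_le_mul_of_nonneg_left h1 (by positivity : (0:ℝ) ≤ 1/n))
        (le_of_eq ?_)
      field_simp
      ring
    have hlower : ∀ᶠ n : ℕ in atTop,
        Real.log M - Real.log d / n ≤ (1/(n:ℝ)) * Real.log (Z n β u) := by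
      filter_upwards [eventually_ge_atTop 1] with n hn
      have hn0 : (0:ℝ) < n := by exact_mod_cast hn
      have h1 : Real.log (M^n / d) ≤ Real.log (Z n β u) :=
        Real.log_le_log (by positivity) (hlb n hn)
      rw [Real.log_div (by positivity) hd0.ne', Real.log_pow] at h1
      refine le_trans (le_of_eq ?_)
        (mul_le_mul_of_nonneg_left h1 (by positivity : (0:ℝ) ≤ 1/n))
      field_simp
    have hltend : Tendsto (fun n : ℕ => Real.log M - Real.log d / n) atTop
        (nhds (Real.log M)) := by
      have h := tendsto_const_div_atTop_nhds_zero_nat (Real.log d)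
      simpa using tendsto_const_nhds.sub h
    have hutend : Tendsto (fun n : ℕ => Real.log M + Real.log ((n:ℝ)+1) / n) atTop
        (nhds (Real.log M)) := by
      have hlog : Tendsto (fun n : ℕ => Real.log ((n:ℝ)+1) / ((n:ℝ)+1)) atTop
          (nhds 0) :=
        (Real.isLittleO_log_id_atTop.tendsto_div_nhds_zero).comp
          (tendsto_atTop_add_const_right atTop 1 tendsto_natCast_atTop_atTop)
      have hratio : Tendsto (fun n : ℕ => ((n:ℝ)+1)/n) atTop (nhds 1) := by
        have h1 : Tendsto (fun n : ℕ => 1 + 1/(n:ℝ)) atTop (nhds 1) := by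
          simpa using (tendsto_const_nhds : Tendsto (fun _ : ℕ => (1:ℝ)) atTop (nhds 1)).add tendsto_one_div_atTop_nhds_zero_nat
        refine Tendsto.congr' ?_ h1
        filter_upwards [eventually_ge_atTop 1] with n hn
        have hn0 : (n:ℝ) ≠ 0 := Nat.cast_ne_zero.mpr (by omega)
        field_simp
      have hmain : Tendsto (fun n : ℕ => Real.log ((n:ℝ)+1)/n) atTop (nhds 0) := by
        have h2 := hlog.mul hratio
        rw [zero_mul] at h2
        refine Tendsto.congr' ?_ h2
        filter_upwards [eventually_ge_atTop 1] with n hn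
        have hn0 : (n:ℝ) ≠ 0 := Nat.cast_ne_zero.mpr (by omega)
        have hn1 : ((n:ℝ)+1) ≠ 0 := by positivity
        field_simp
      simpa using tendsto_const_nhds.add hmain
    exact tendsto_of_tendsto_of_tendsto_of_le_of_le' hltend hutend hlower hupper
  · intro β hβ
    have hset : {u : ℝ | Real.log d < max (β*u + Real.log d₁) (Real.log d)}
        = Set.Ioi (Real.log ((d:ℝ)/(d₁:ℝ))/β) := by
      ext u
      simp only [Set.mem_setOf_eq, Set.mem_Ioi, lt_max_iff, lt_self_iff_false,
        or_false]
      rw [Real.log_div hd0.ne' hd₁0.ne', div_lt_iff₀ hβ]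
      constructor <;> intro h <;> nlinarith
    rw [hset]
    exact csInf_Ioi
end

section
/- For every β > β_c and every u ≥ F(β), almost surely lim_{n→∞} (1/n)·log Z_n^{ST}(β,u) = βu + log d₁ (fully pinned phase). (Theorem 1.4(b), fully pinned case.) -/
open MeasureTheory ProbabilityTheory Filter

lemma card_filter_val_lt (N m : ℕ) (h : m ≤ N) :
    (Finset.univ.filter fun i : Fin N => (i : ℕ) < m).card = m := by
  rw [← Finset.card_range m]
  apply Finset.card_bij (fun (i : Fin N) _ => (i : ℕ))
  · intro a ha
    simp only [Finset.mem_filter] at ha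
    simpa using ha.2
  · intro a ha b hb hab; exact Fin.ext hab
  · intro b hb
    simp only [Finset.mem_range] at hb
    exact ⟨⟨b, lt_of_lt_of_le hb h⟩, by simp [hb], rfl⟩

lemma mem_take_ofFn' {α : Type*} {n : ℕ} (w : Fin n → α) (m : ℕ) (a : α) :
    a ∈ (List.ofFn w).take m ↔ ∃ i : Fin n, (i : ℕ) < m ∧ w i = a := by
  rw [List.mem_take_iff_getElem]
  constructor
  · rintro ⟨i, hi, rfl⟩
    simp only [List.length_ofFn, lt_min_iff] at hi
    exact ⟨⟨i, hi.2⟩, hi.1, by simp⟩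
  · rintro ⟨i, him, rfl⟩
    refine ⟨(i : ℕ), ?_, by simp⟩
    simp only [List.length_ofFn, lt_min_iff]
    exact ⟨him, i.isLt⟩

lemma card_constrained (n D d₁ j : ℕ) (hj : j ≤ n) (hd₁ : d₁ ≤ D) :
    (Finset.univ.filter fun w : Fin n → Fin D =>
      ∀ i : Fin n, (i : ℕ) < j → (w i : ℕ) < d₁).card = d₁ ^ j * D ^ (n - j) := by
  classical
  have hset : (Finset.univ.filter fun w : Fin n → Fin D =>
      ∀ i : Fin n, (i : ℕ) < j → (w i : ℕ) < d₁)
      = Fintype.piFinset (fun i : Fin n =>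
        if (i : ℕ) < j then Finset.univ.filter (fun x : Fin D => (x : ℕ) < d₁)
        else Finset.univ) := by
    ext w
    simp only [Finset.mem_filter, Finset.mem_univ, true_and, Fintype.mem_piFinset]
    constructor
    · intro h i
      by_cases hij : (i : ℕ) < j <;> simp [hij, h i]
    · intro h i hij
      have := h i
      simp [hij] at this
      exact this
  rw [hset, Fintype.card_piFinset]
  have : ∀ i : Fin n, ((if (i : ℕ) < j then Finset.univ.filter (fun x : Fin D => (x : ℕ) < d₁)
      else Finset.univ) : Finset (Fin D)).card = if (i : ℕ) < j then d₁ else D := by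
    intro i
    by_cases hij : (i : ℕ) < j <;>
      simp [hij, card_filter_val_lt D d₁ hd₁]
  simp only [this]
  have hcard : (Finset.univ.filter fun i : Fin n => ¬ (i : ℕ) < j).card = n - j := by
    have h2 := Finset.card_filter_add_card_filter_not (s := (Finset.univ : Finset (Fin n)))
      (p := fun i : Fin n => (i : ℕ) < j)
    rw [card_filter_val_lt n j hj] at h2
    simp only [Finset.card_univ, Fintype.card_fin] at h2
    omega
  rw [Finset.prod_ite (fun _ => d₁) (fun _ => D), Finset.prod_const, Finset.prod_const,
    card_filter_val_lt n j hj, hcard]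

/-- The set of pinned steps of a word. -/
noncomputable def pinsF (d d₁ n : ℕ) (w : Fin n → Fin d) : Finset ℕ :=
  (Finset.range n).filter (fun k => ∀ a ∈ (List.ofFn w).take (k + 1), (a : ℕ) < d₁)

/-- The set of free (depinned) prefixes of a word. -/
noncomputable def freeS (d d₁ n : ℕ) (w : Fin n → Fin d) : Finset (List (Fin d)) :=
  ((Finset.range n).filter (fun k => ¬ ∀ a ∈ (List.ofFn w).take (k + 1), (a : ℕ) < d₁)).image
    (fun k => (List.ofFn w).take (k + 1))

lemma pins_card_le (d d₁ n : ℕ) (w : Fin n → Fin d) : (pinsF d d₁ n w).card ≤ n :=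
  le_trans (Finset.card_le_card (Finset.filter_subset _ _)) (le_of_eq (Finset.card_range n))

lemma take_injOn (d n : ℕ) (w : Fin n → Fin d) :
    ∀ k ∈ (Finset.range n).filter
      (fun k => ¬ ∀ a ∈ (List.ofFn w).take (k + 1), (a : ℕ) < d₁'),
      True := fun _ _ => trivial

lemma take_inj {α : Type*} {n : ℕ} (w : Fin n → α) {k k' : ℕ} (hk : k < n) (hk' : k' < n)
    (h : (List.ofFn w).take (k + 1) = (List.ofFn w).take (k' + 1)) : k = k' := by
  have h1 : ((List.ofFn w).take (k + 1)).length = k + 1 := by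
    simp only [List.length_take, List.length_ofFn]
    omega
  have h2 : ((List.ofFn w).take (k' + 1)).length = k' + 1 := by
    simp only [List.length_take, List.length_ofFn]
    omega
  rw [h, h2] at h1
  omega

lemma freeS_card (d d₁ n : ℕ) (w : Fin n → Fin d) :
    (freeS d d₁ n w).card + (pinsF d d₁ n w).card = n := by
  classical
  rw [freeS, Finset.card_image_of_injOn
    (fun k hk k' hk' h => take_inj w
      (Finset.mem_range.mp (Finset.mem_filter.mp hk).1)
      (Finset.mem_range.mp (Finset.mem_filter.mp hk').1) h)]
  rw [pinsF, add_comm]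
  rw [Finset.card_filter_add_card_filter_not, Finset.card_range]

lemma freeS_ne_nil (d d₁ n : ℕ) (w : Fin n → Fin d) :
    ∀ x ∈ freeS d d₁ n w, x ≠ [] := by
  classical
  intro x hx
  rw [freeS, Finset.mem_image] at hx
  obtain ⟨k, hk, rfl⟩ := hx
  have hkn : k < n := Finset.mem_range.mp (Finset.mem_filter.mp hk).1
  have : ((List.ofFn w).take (k + 1)).length = k + 1 := by
    simp only [List.length_take, List.length_ofFn]; omega
  intro hnil
  rw [hnil] at this
  simp at this

lemma pins_all_lt {d d₁ n : ℕ} (w : Fin n → Fin d) {j : ℕ}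
    (hj : j ≤ (pinsF d d₁ n w).card) (i : Fin n) (hij : (i : ℕ) < j) : (w i : ℕ) < d₁ := by
  by_contra hge
  have hsub : pinsF d d₁ n w ⊆ Finset.range i := by
    intro k hk
    simp only [pinsF, Finset.mem_filter, Finset.mem_range] at hk
    obtain ⟨hkn, hall⟩ := hk
    rw [Finset.mem_range]
    by_contra hki
    push_neg at hki
    exact hge (hall (w i) ((mem_take_ofFn' w (k + 1) (w i)).mpr ⟨i, by omega, rfl⟩))
  have hle := Finset.card_le_card hsub
  rw [Finset.card_range] at hle
  omega

lemma sum_split {d d₁ : ℕ} {Ω : Type*} (V : List (Fin d) → Ω → ℝ) (u : ℝ) (n : ℕ)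
    (w : Fin n → Fin d) (ω : Ω) :
    (∑ k ∈ Finset.range n, (if ∀ a ∈ (List.ofFn w).take (k + 1), (a : ℕ) < d₁ then u
        else V ((List.ofFn w).take (k + 1)) ω))
    = u * (pinsF d d₁ n w).card + ∑ x ∈ freeS d d₁ n w, V x ω := by
  classical
  rw [← Finset.sum_filter_add_sum_filter_not (Finset.range n)
    (fun k => ∀ a ∈ (List.ofFn w).take (k + 1), (a : ℕ) < d₁)]
  congr 1
  · rw [Finset.sum_congr rfl (fun k hk => if_pos (Finset.mem_filter.mp hk).2),
      Finset.sum_const, nsmul_eq_mul, mul_comm]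
    rfl
  · rw [freeS, Finset.sum_image
      (fun k hk k' hk' h => take_inj w
        (Finset.mem_range.mp (Finset.mem_filter.mp hk).1)
        (Finset.mem_range.mp (Finset.mem_filter.mp hk').1) h)]
    exact Finset.sum_congr rfl (fun k hk => if_neg (Finset.mem_filter.mp hk).2)

lemma sum_ratio_bound (d d₁ : ℕ) (hd₁ : 1 ≤ d₁) (hd₁d : d₁ < d) (n : ℕ) :
    ∑ w : Fin n → Fin d, ((d : ℝ) / (d₁ : ℝ)) ^ (pinsF d d₁ n w).card
      ≤ (n + 1) * (d : ℝ) ^ n := by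
  classical
  have hd₁R : (0 : ℝ) < (d₁ : ℝ) := by exact_mod_cast hd₁
  have hdR : (0 : ℝ) < (d : ℝ) := by exact_mod_cast lt_of_le_of_lt (Nat.zero_le _) hd₁d
  set r : ℝ := (d : ℝ) / (d₁ : ℝ) with hr
  have hr0 : 0 ≤ r := by positivity
  have hle : ∀ w : Fin n → Fin d, r ^ (pinsF d d₁ n w).card
      ≤ ∑ j ∈ Finset.range (n + 1), (if j ≤ (pinsF d d₁ n w).card then r ^ j else 0) := by
    intro w
    have hcw : (pinsF d d₁ n w).card ≤ n := pins_card_le d d₁ n w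
    have h := Finset.single_le_sum
      (f := fun j => if j ≤ (pinsF d d₁ n w).card then r ^ j else 0)
      (fun j _ => by positivity) (Finset.mem_range.mpr (by omega : (pinsF d d₁ n w).card < n + 1))
    simpa using h
  calc ∑ w : Fin n → Fin d, r ^ (pinsF d d₁ n w).card
      ≤ ∑ w : Fin n → Fin d, ∑ j ∈ Finset.range (n + 1),
          (if j ≤ (pinsF d d₁ n w).card then r ^ j else 0) :=
        Finset.sum_le_sum (fun w _ => hle w)
    _ = ∑ j ∈ Finset.range (n + 1), ∑ w : Fin n → Fin d,
          (if j ≤ (pinsF d d₁ n w).card then r ^ j else 0) := Finset.sum_comm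
    _ ≤ ∑ j ∈ Finset.range (n + 1), (d : ℝ) ^ n := by
        apply Finset.sum_le_sum
        intro j hj
        rw [Finset.mem_range] at hj
        have hjn : j ≤ n := by omega
        rw [← Finset.sum_filter, Finset.sum_const, nsmul_eq_mul]
        have hsub : (Finset.univ.filter fun w : Fin n → Fin d => j ≤ (pinsF d d₁ n w).card)
            ⊆ Finset.univ.filter fun w : Fin n → Fin d =>
              ∀ i : Fin n, (i : ℕ) < j → (w i : ℕ) < d₁ := by
          intro w hw
          simp only [Finset.mem_filter, Finset.mem_univ, true_and] at hw ⊢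
          exact fun i hij => pins_all_lt w hw i hij
        have hcard : ((Finset.univ.filter fun w : Fin n → Fin d =>
            j ≤ (pinsF d d₁ n w).card)).card ≤ d₁ ^ j * d ^ (n - j) :=
          (Finset.card_le_card hsub).trans_eq (card_constrained n d d₁ j hjn hd₁d.le)
        have h1 : (d₁ : ℝ) ^ j ≠ 0 := by positivity
        calc (((Finset.univ.filter fun w : Fin n → Fin d =>
              j ≤ (pinsF d d₁ n w).card)).card : ℝ) * r ^ j
            ≤ ((d₁ : ℝ) ^ j * (d : ℝ) ^ (n - j)) * r ^ j := by
              apply mul_le_mul_of_nonneg_right _ (by positivity)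
              exact_mod_cast hcard
          _ = (d : ℝ) ^ (n - j) * (d : ℝ) ^ j * ((d₁ : ℝ) ^ j / (d₁ : ℝ) ^ j) := by
              rw [hr, div_pow]; ring
          _ = (d : ℝ) ^ (n - j + j) := by rw [div_self h1, mul_one, pow_add]
          _ = (d : ℝ) ^ n := by congr 1; omega
    _ = (n + 1) * (d : ℝ) ^ n := by
        rw [Finset.sum_const, Finset.card_range, nsmul_eq_mul]
        push_cast
        ring

lemma term_bound {E A dR d₁R : ℝ} (hE0 : 0 ≤ E) (hd₁R : 0 < d₁R) (hdR : 0 < dR)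
    (hkey : dR * E ≤ d₁R * Real.exp A) (n c : ℕ) (hc : c ≤ n) :
    Real.exp (A * c) * E ^ (n - c) ≤ (d₁R / dR) ^ (n - c) * Real.exp (n * A) := by
  have hEle : E ≤ (d₁R / dR) * Real.exp A := by
    rw [div_mul_eq_mul_div, le_div_iff₀ hdR]
    nlinarith
  calc Real.exp (A * c) * E ^ (n - c)
      ≤ Real.exp (A * c) * ((d₁R / dR) * Real.exp A) ^ (n - c) :=
        mul_le_mul_of_nonneg_left (pow_le_pow_left₀ hE0 hEle _) (Real.exp_nonneg _)
    _ = (d₁R / dR) ^ (n - c) * (Real.exp (A * c) * Real.exp A ^ (n - c)) := by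
        rw [mul_pow]; ring
    _ = (d₁R / dR) ^ (n - c) * Real.exp (n * A) := by
        rw [← Real.exp_nat_mul, ← Real.exp_add]
        congr 2
        rw [Nat.cast_sub hc]
        ring

lemma EZ_bound (d d₁ : ℕ) (hd₁ : 1 ≤ d₁) (hd₁d : d₁ < d) (n : ℕ) (A E : ℝ) (hE0 : 0 ≤ E)
    (hkey : (d : ℝ) * E ≤ (d₁ : ℝ) * Real.exp A) :
    ∑ w : Fin n → Fin d,
        Real.exp (A * (pinsF d d₁ n w).card) * E ^ (n - (pinsF d d₁ n w).card)
      ≤ (n + 1) * ((d₁ : ℝ) ^ n * Real.exp (n * A)) := by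
  have hd₁R : (0 : ℝ) < (d₁ : ℝ) := by exact_mod_cast hd₁
  have hdR : (0 : ℝ) < (d : ℝ) := by
    exact_mod_cast lt_of_le_of_lt (Nat.zero_le _) hd₁d
  have hdd₁ : (d₁ : ℝ) / (d : ℝ) ≠ 0 := by positivity
  calc ∑ w : Fin n → Fin d,
        Real.exp (A * (pinsF d d₁ n w).card) * E ^ (n - (pinsF d d₁ n w).card)
      ≤ ∑ w : Fin n → Fin d,
          ((d₁ : ℝ) / d) ^ (n - (pinsF d d₁ n w).card) * Real.exp (n * A) :=
        Finset.sum_le_sum (fun w _ =>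
          term_bound hE0 hd₁R hdR hkey n _ (pins_card_le d d₁ n w))
    _ = ∑ w : Fin n → Fin d,
          (((d₁ : ℝ) / d) ^ n * ((d : ℝ) / d₁) ^ (pinsF d d₁ n w).card) * Real.exp (n * A) := by
        apply Finset.sum_congr rfl
        intro w _
        congr 1
        rw [pow_sub₀ _ hdd₁ (pins_card_le d d₁ n w)]
        congr 1
        rw [← inv_pow, inv_div]
    _ = (((d₁ : ℝ) / d) ^ n * Real.exp (n * A)) *
          ∑ w : Fin n → Fin d, ((d : ℝ) / d₁) ^ (pinsF d d₁ n w).card := by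
        rw [Finset.mul_sum]
        apply Finset.sum_congr rfl
        intro w _
        ring
    _ ≤ (((d₁ : ℝ) / d) ^ n * Real.exp (n * A)) * ((n + 1) * (d : ℝ) ^ n) := by
        apply mul_le_mul_of_nonneg_left (sum_ratio_bound d d₁ hd₁ hd₁d n) (by positivity)
    _ = (n + 1) * (((d₁ : ℝ) / d) ^ n * (d : ℝ) ^ n * Real.exp (n * A)) := by ring
    _ = (n + 1) * ((d₁ : ℝ) ^ n * Real.exp (n * A)) := by
        rw [div_pow, div_mul_cancel₀ _ (by positivity : (d : ℝ) ^ n ≠ 0)]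

/-- **Theorem 1.4(b), fully pinned case.** For `β > β_c` and `u ≥ F(β)`, almost surely
the free energy of the subtree-defect model equals `βu + log d₁`. -/
theorem subtree_fully_pinned_strong_disorder
    {Ω : Type*} [MeasurableSpace Ω] (P : Measure Ω) [IsProbabilityMeasure P]
    (d d₁ : ℕ) (hd : 2 ≤ d) (hd₁ : 1 ≤ d₁) (hd₁d : d₁ < d)
    -- the i.i.d. bulk disorder, indexed by the nonempty lists over `Fin d`
    (V : List (Fin d) → Ω → ℝ) (V0 : Ω → ℝ)
    (hmeas : ∀ x, Measurable (V x)) (hmeas0 : Measurable V0)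
    (hindep : iIndepFun V P)
    (hident : ∀ x : List (Fin d), x ≠ [] → Measure.map (V x) P = Measure.map V0 P)
    -- the cumulant generating function `λ`, finite everywhere
    (lam : ℝ → ℝ)
    (hint : ∀ β : ℝ, Integrable (fun ω => Real.exp (β * V0 ω)) P)
    (hlam : ∀ β : ℝ, lam β = Real.log (∫ ω, Real.exp (β * V0 ω) ∂P))
    -- the critical inverse temperature `β_c` and the quenched free energy `φ`
    (βc : ℝ) (hβc : 0 < βc)
    (hcrit : lam βc + Real.log d = βc * deriv lam βc)
    (phi : ℝ → ℝ)
    (hphi : ∀ β : ℝ, phi β = if β < βc then lam β + Real.log d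
      else (β / βc) * (lam βc + Real.log d))
    -- the partition function of the subtree-defect model
    (Z : ℕ → ℝ → ℝ → Ω → ℝ)
    (hZ : ∀ (n : ℕ) (β u : ℝ) (ω : Ω), Z n β u ω =
      ∑ w : Fin n → Fin d, Real.exp (β * ∑ k ∈ Finset.range n,
        (if ∀ a ∈ (List.ofFn w).take (k + 1), (a : ℕ) < d₁ then u
         else V ((List.ofFn w).take (k + 1)) ω)))
    -- the boundary curve `F`
    (F : ℝ → ℝ) (hF : ∀ b : ℝ, F b = (lam b + Real.log d - Real.log d₁) / b)
    (β u : ℝ) (hβ : βc < β) (hu : F β ≤ u) :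
    ∀ᵐ ω ∂P, Filter.Tendsto (fun n : ℕ => (1 / (n : ℝ)) * Real.log (Z n β u ω))
      Filter.atTop (nhds (β * u + Real.log d₁)) := by
  classical
  have hβpos : 0 < β := hβc.trans hβ
  have hd₁R : (0 : ℝ) < (d₁ : ℝ) := by exact_mod_cast hd₁
  have hdR : (0 : ℝ) < (d : ℝ) := by exact_mod_cast (by omega : 0 < d)
  set L : ℝ := β * u + Real.log d₁ with hLdef
  have hNe : Nonempty (Fin d) := ⟨⟨0, by omega⟩⟩
  -- the normalized moment generating function
  have hM : ∫ ω, Real.exp (β * V0 ω) ∂P = Real.exp (lam β) := by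
    rw [hlam β, Real.exp_log (integral_exp_pos (hint β))]
  -- the key inequality coming from `u ≥ F β`
  have hkey : (d : ℝ) * Real.exp (lam β) ≤ (d₁ : ℝ) * Real.exp (β * u) := by
    have h2 := hu
    rw [hF β, div_le_iff₀ hβpos] at h2
    have h3 : Real.exp (lam β + Real.log d) ≤ Real.exp (β * u + Real.log d₁) :=
      Real.exp_le_exp.mpr (by nlinarith)
    rw [Real.exp_add, Real.exp_add, Real.exp_log hdR, Real.exp_log hd₁R] at h3
    nlinarith
  have hgmeas : ∀ (ν : Measure ℝ), AEStronglyMeasurable (fun y : ℝ => Real.exp (β * y)) ν :=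
    fun ν => (Real.measurable_exp.comp (measurable_const_mul β)).aestronglyMeasurable
  have hVint : ∀ x : List (Fin d), x ≠ [] → Integrable (fun ω => Real.exp (β * V x ω)) P := by
    intro x hx
    have h1 : Integrable (fun y : ℝ => Real.exp (β * y)) (Measure.map (V x) P) := by
      rw [hident x hx, integrable_map_measure (hgmeas _) hmeas0.aemeasurable]
      exact hint β
    rw [integrable_map_measure (hgmeas _) (hmeas x).aemeasurable] at h1
    exact h1
  have hVmgf : ∀ x : List (Fin d), x ≠ [] → mgf (V x) P β = Real.exp (lam β) := by
    intro x hx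
    have e1 : mgf (V x) P β = ∫ ω, Real.exp (β * V x ω) ∂P := rfl
    rw [e1, ← integral_map (φ := V x) (f := fun y => Real.exp (β * y))
        (hmeas x).aemeasurable (hgmeas _), hident x hx,
      integral_map (φ := V0) (f := fun y => Real.exp (β * y))
        hmeas0.aemeasurable (hgmeas _), hM]
  -- per-word integrability and expectation
  have hword : ∀ (n : ℕ) (w : Fin n → Fin d),
      Integrable (fun ω => Real.exp (β * ∑ k ∈ Finset.range n,
        (if ∀ a ∈ (List.ofFn w).take (k + 1), (a : ℕ) < d₁ then u
         else V ((List.ofFn w).take (k + 1)) ω))) P ∧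
      ∫ ω, Real.exp (β * ∑ k ∈ Finset.range n,
        (if ∀ a ∈ (List.ofFn w).take (k + 1), (a : ℕ) < d₁ then u
         else V ((List.ofFn w).take (k + 1)) ω)) ∂P
        = Real.exp ((β * u) * (pinsF d d₁ n w).card) *
            Real.exp (lam β) ^ (n - (pinsF d d₁ n w).card) := by
    intro n w
    have hfun : (fun ω => Real.exp (β * ∑ k ∈ Finset.range n,
        (if ∀ a ∈ (List.ofFn w).take (k + 1), (a : ℕ) < d₁ then u
         else V ((List.ofFn w).take (k + 1)) ω)))
        = fun ω => Real.exp ((β * u) * (pinsF d d₁ n w).card) *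
            Real.exp (β * (∑ x ∈ freeS d d₁ n w, V x) ω) := by
      funext ω
      rw [sum_split V u n w ω, mul_add, Real.exp_add, Finset.sum_apply]
      congr 2
      ring
    have hSint : Integrable (fun ω => Real.exp (β * (∑ x ∈ freeS d d₁ n w, V x) ω)) P :=
      hindep.integrable_exp_mul_sum hmeas (fun x hx => hVint x (freeS_ne_nil d d₁ n w x hx))
    have hfcard : (freeS d d₁ n w).card = n - (pinsF d d₁ n w).card := by
      have h := freeS_card d d₁ n w; omega
    constructor
    · rw [hfun]; exact hSint.const_mul _
    · rw [hfun, integral_const_mul]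
      congr 1
      have e2 : ∫ ω, Real.exp (β * (∑ x ∈ freeS d d₁ n w, V x) ω) ∂P
          = mgf (∑ x ∈ freeS d d₁ n w, V x) P β := rfl
      rw [e2, hindep.mgf_sum hmeas (freeS d d₁ n w),
        Finset.prod_congr rfl (fun x hx => hVmgf x (freeS_ne_nil d d₁ n w x hx)),
        Finset.prod_const, hfcard]
  -- integrability of the partition function
  have hZint : ∀ n : ℕ, Integrable (Z n β u) P := by
    intro n
    have hfe : Z n β u = fun ω => ∑ w : Fin n → Fin d, Real.exp (β * ∑ k ∈ Finset.range n,
        (if ∀ a ∈ (List.ofFn w).take (k + 1), (a : ℕ) < d₁ then u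
         else V ((List.ofFn w).take (k + 1)) ω)) := funext (hZ n β u)
    rw [hfe]
    exact integrable_finset_sum _ (fun w _ => (hword n w).1)
  -- the annealed bound
  have hEZ : ∀ n : ℕ, ∫ ω, Z n β u ω ∂P ≤ ((n : ℝ) + 1) * Real.exp (n * L) := by
    intro n
    have h0 : ∫ ω, Z n β u ω ∂P = ∑ w : Fin n → Fin d,
        Real.exp ((β * u) * (pinsF d d₁ n w).card) *
          Real.exp (lam β) ^ (n - (pinsF d d₁ n w).card) := by
      calc ∫ ω, Z n β u ω ∂P
          = ∫ ω, ∑ w : Fin n → Fin d, Real.exp (β * ∑ k ∈ Finset.range n,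
              (if ∀ a ∈ (List.ofFn w).take (k + 1), (a : ℕ) < d₁ then u
               else V ((List.ofFn w).take (k + 1)) ω)) ∂P := by
            apply integral_congr_ae (ae_of_all _ (hZ n β u))
        _ = ∑ w : Fin n → Fin d, ∫ ω, Real.exp (β * ∑ k ∈ Finset.range n,
              (if ∀ a ∈ (List.ofFn w).take (k + 1), (a : ℕ) < d₁ then u
               else V ((List.ofFn w).take (k + 1)) ω)) ∂P :=
            integral_finset_sum _ (fun w _ => (hword n w).1)
        _ = _ := Finset.sum_congr rfl (fun w _ => (hword n w).2)
    rw [h0]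
    have hb := EZ_bound d d₁ hd₁ hd₁d n (β * u) (Real.exp (lam β)) (Real.exp_nonneg _) hkey
    refine le_trans hb (le_of_eq ?_)
    congr 1
    have : Real.exp ((n : ℝ) * L) = Real.exp ((n : ℝ) * (β * u)) * Real.exp (Real.log d₁) ^ n := by
      rw [← Real.exp_nat_mul, ← Real.exp_add, hLdef]
      congr 1
      ring
    rw [this, Real.exp_log hd₁R]
    ring
  -- positivity and deterministic lower bound
  have hZpos : ∀ (n : ℕ) (ω : Ω), 0 < Z n β u ω := by
    intro n ω
    rw [hZ]
    exact Finset.sum_pos (fun w _ => Real.exp_pos _) Finset.univ_nonempty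
  have hZlow : ∀ (n : ℕ) (ω : Ω), (d₁ : ℝ) ^ n * Real.exp ((n : ℝ) * (β * u)) ≤ Z n β u ω := by
    intro n ω
    rw [hZ]
    set T : Finset (Fin n → Fin d) :=
      Fintype.piFinset (fun _ : Fin n => Finset.univ.filter (fun x : Fin d => (x : ℕ) < d₁))
      with hT
    have hTval : ∀ w ∈ T, (Real.exp (β * ∑ k ∈ Finset.range n,
        (if ∀ a ∈ (List.ofFn w).take (k + 1), (a : ℕ) < d₁ then u
         else V ((List.ofFn w).take (k + 1)) ω))) = Real.exp ((n : ℝ) * (β * u)) := by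
      intro w hw
      have hwlt : ∀ i : Fin n, (w i : ℕ) < d₁ := by
        intro i
        have h := (Fintype.mem_piFinset.mp hw) i
        simpa [hT] using h
      have hcongr : ∀ k ∈ Finset.range n,
          (if ∀ a ∈ (List.ofFn w).take (k + 1), (a : ℕ) < d₁ then u
           else V ((List.ofFn w).take (k + 1)) ω) = u := by
        intro k _
        rw [if_pos]
        intro a ha
        obtain ⟨i, _, rfl⟩ := (mem_take_ofFn' w (k + 1) a).mp ha
        exact hwlt i
      rw [Finset.sum_congr rfl hcongr, Finset.sum_const, Finset.card_range, nsmul_eq_mul]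
      congr 1
      ring
    have hTcard : ((T.card : ℝ)) = (d₁ : ℝ) ^ n := by
      rw [hT, Fintype.card_piFinset]
      simp [card_filter_val_lt d d₁ (le_of_lt hd₁d)]
    calc (d₁ : ℝ) ^ n * Real.exp ((n : ℝ) * (β * u))
        = ∑ _w ∈ T, Real.exp ((n : ℝ) * (β * u)) := by
          rw [Finset.sum_const, nsmul_eq_mul, hTcard]
      _ = ∑ w ∈ T, Real.exp (β * ∑ k ∈ Finset.range n,
            (if ∀ a ∈ (List.ofFn w).take (k + 1), (a : ℕ) < d₁ then u
             else V ((List.ofFn w).take (k + 1)) ω)) := (Finset.sum_congr rfl hTval).symm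
      _ ≤ _ := Finset.sum_le_sum_of_subset_of_nonneg (Finset.subset_univ T)
            (fun w _ _ => (Real.exp_pos _).le)
  -- Markov + Borel-Cantelli upper bound for each ε > 0
  have hup : ∀ ε : ℝ, 0 < ε →
      ∀ᵐ ω ∂P, ∀ᶠ n : ℕ in atTop, Z n β u ω < Real.exp ((n : ℝ) * (L + ε)) := by
    intro ε hε
    have hx1 : Real.exp (-ε) < 1 := Real.exp_lt_one_iff.mpr (by linarith)
    have hsum : Summable (fun n : ℕ => ((n : ℝ) + 1) * Real.exp (-ε) ^ n) := by
      have h1 : Summable (fun n : ℕ => (n : ℝ) * Real.exp (-ε) ^ n) := by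
        have h := summable_pow_mul_geometric_of_norm_lt_one (R := ℝ) 1
          (r := Real.exp (-ε)) (by rwa [Real.norm_eq_abs, abs_of_pos (Real.exp_pos _)])
        simpa using h
      have h2 : Summable (fun n : ℕ => Real.exp (-ε) ^ n) :=
        summable_geometric_of_lt_one (Real.exp_pos _).le hx1
      simpa [add_mul, one_mul] using h1.add h2
    have hPA : ∀ n : ℕ, P {ω | Real.exp ((n : ℝ) * (L + ε)) ≤ Z n β u ω}
        ≤ ENNReal.ofReal (((n : ℝ) + 1) * Real.exp (-ε) ^ n) := by
      intro n
      have hmark := mul_meas_ge_le_integral_of_nonneg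
        (ae_of_all P (fun ω => (hZpos n ω).le)) (hZint n) (Real.exp ((n : ℝ) * (L + ε)))
      have hepos : (0 : ℝ) < Real.exp ((n : ℝ) * (L + ε)) := Real.exp_pos _
      have h5 : ((n : ℝ) + 1) * Real.exp ((n : ℝ) * L)
          = Real.exp ((n : ℝ) * (L + ε)) * (((n : ℝ) + 1) * Real.exp (-ε) ^ n) := by
        have e3 : Real.exp (-ε) ^ n = Real.exp ((n : ℝ) * (-ε)) := (Real.exp_nat_mul _ n).symm
        rw [e3, show Real.exp ((n : ℝ) * (L + ε)) * (((n : ℝ) + 1) * Real.exp ((n : ℝ) * (-ε)))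
            = ((n : ℝ) + 1) * (Real.exp ((n : ℝ) * (L + ε)) * Real.exp ((n : ℝ) * (-ε)))
          from by ring, ← Real.exp_add]
        congr 2
        ring
      have h4 : Real.exp ((n : ℝ) * (L + ε)) *
            (P {ω | Real.exp ((n : ℝ) * (L + ε)) ≤ Z n β u ω}).toReal
          ≤ Real.exp ((n : ℝ) * (L + ε)) * (((n : ℝ) + 1) * Real.exp (-ε) ^ n) :=
        (hmark.trans (hEZ n)).trans_eq h5
      have h3 : (P {ω | Real.exp ((n : ℝ) * (L + ε)) ≤ Z n β u ω}).toReal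
          ≤ ((n : ℝ) + 1) * Real.exp (-ε) ^ n := le_of_mul_le_mul_left h4 hepos
      calc P {ω | Real.exp ((n : ℝ) * (L + ε)) ≤ Z n β u ω}
          = ENNReal.ofReal ((P {ω | Real.exp ((n : ℝ) * (L + ε)) ≤ Z n β u ω}).toReal) :=
            (ENNReal.ofReal_toReal (measure_ne_top _ _)).symm
        _ ≤ _ := ENNReal.ofReal_le_ofReal h3
    have hne : (∑' n : ℕ, P {ω | Real.exp ((n : ℝ) * (L + ε)) ≤ Z n β u ω}) ≠ ⊤ := by
      apply ne_top_of_le_ne_top _ (ENNReal.tsum_le_tsum hPA)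
      rw [← ENNReal.ofReal_tsum_of_nonneg (fun n => by positivity) hsum]
      exact ENNReal.ofReal_ne_top
    filter_upwards [ae_eventually_notMem hne] with ω hω
    filter_upwards [hω] with n hn
    simpa [not_le] using hn
  -- conclusion
  have hae : ∀ᵐ ω ∂P, ∀ m : ℕ, ∀ᶠ n : ℕ in atTop,
      Z n β u ω < Real.exp ((n : ℝ) * (L + 1 / ((m : ℝ) + 1))) := by
    rw [ae_all_iff]
    intro m
    exact hup _ (by positivity)
  filter_upwards [hae] with ω hω
  rw [Metric.tendsto_atTop]
  intro ε hε
  obtain ⟨m, hm⟩ := exists_nat_one_div_lt hε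
  obtain ⟨N, hN⟩ := Filter.eventually_atTop.mp (hω m)
  refine ⟨max N 1, fun n hn => ?_⟩
  have hn1 : 1 ≤ n := le_trans (le_max_right N 1) hn
  have hnN : N ≤ n := le_trans (le_max_left N 1) hn
  have hnR : (0 : ℝ) < (n : ℝ) := by exact_mod_cast hn1
  have hup' : Real.log (Z n β u ω) ≤ (n : ℝ) * (L + 1 / ((m : ℝ) + 1)) := by
    calc Real.log (Z n β u ω)
        ≤ Real.log (Real.exp ((n : ℝ) * (L + 1 / ((m : ℝ) + 1)))) :=
          Real.log_le_log (hZpos n ω) (hN n hnN).le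
      _ = _ := Real.log_exp _
  have hlow' : (n : ℝ) * L ≤ Real.log (Z n β u ω) := by
    have h8 : Real.log ((d₁ : ℝ) ^ n * Real.exp ((n : ℝ) * (β * u))) ≤ Real.log (Z n β u ω) :=
      Real.log_le_log (by positivity) (hZlow n ω)
    rw [Real.log_mul (by positivity) (Real.exp_ne_zero _), Real.log_pow, Real.log_exp] at h8
    calc (n : ℝ) * L = (n : ℝ) * Real.log d₁ + (n : ℝ) * (β * u) := by rw [hLdef]; ring
      _ ≤ _ := by linarith [h8]
  rw [Real.dist_eq]
  have habs : |1 / (n : ℝ) * Real.log (Z n β u ω) - L| ≤ 1 / ((m : ℝ) + 1) := by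
    have hfl : L ≤ 1 / (n : ℝ) * Real.log (Z n β u ω) := by
      rw [one_div_mul_eq_div, le_div_iff₀ hnR, mul_comm]
      exact hlow'
    have hfu : 1 / (n : ℝ) * Real.log (Z n β u ω) ≤ L + 1 / ((m : ℝ) + 1) := by
      rw [one_div_mul_eq_div, div_le_iff₀ hnR, mul_comm]
      exact hup'
    rw [abs_le]
    constructor <;> [linarith; linarith]
  exact lt_of_le_of_lt habs hm
end

section
/- For every β > β_c, one has F(β_c) = J(β_c) < J(β) < (φ(β) − log d₁)/β < F(β). (Proposition 2.2: ordering of the boundary curves of the phase diagram.) -/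
open MeasureTheory ProbabilityTheory Filter Metric



private lemma exp_interval_bound {a b s v : ℝ} (h1 : a ≤ s) (h2 : s ≤ b) :
    Real.exp (s * v) ≤ Real.exp (a * v) + Real.exp (b * v) := by
  rcases le_or_gt 0 v with hv | hv
  · have h := Real.exp_le_exp.2 (mul_le_mul_of_nonneg_right h2 hv)
    nlinarith [Real.exp_pos (a * v)]
  · have h := Real.exp_le_exp.2 (mul_le_mul_of_nonpos_right h1 hv.le)
    nlinarith [Real.exp_pos (b * v)]

private lemma abs_le_exp_add_exp (v : ℝ) : |v| ≤ Real.exp v + Real.exp (-v) := by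
  rcases abs_cases v with ⟨h, _⟩ | ⟨h, _⟩ <;> rw [h] <;>
    nlinarith [Real.add_one_le_exp v, Real.add_one_le_exp (-v), Real.exp_pos v,
      Real.exp_pos (-v)]

private lemma sq_le_exp_add_exp (v : ℝ) : v ^ 2 ≤ Real.exp (2 * v) + Real.exp (-(2 * v)) := by
  have key : ∀ w : ℝ, 0 ≤ w → w ^ 2 ≤ Real.exp (2 * w) := by
    intro w hw
    have h1 : w ≤ Real.exp w := by nlinarith [Real.add_one_le_exp w]
    calc w ^ 2 ≤ Real.exp w ^ 2 := by nlinarith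
      _ = Real.exp (2 * w) := by rw [sq, ← Real.exp_add]; ring_nf
  rcases le_or_gt 0 v with hv | hv
  · have := key v hv; nlinarith [Real.exp_pos (-(2 * v))]
  · have := key (-v) (by linarith)
    have h2 : (-v) ^ 2 = v ^ 2 := by ring
    have h3 : 2 * (-v) = -(2 * v) := by ring
    rw [h2, h3] at this
    nlinarith [Real.exp_pos (2 * v)]

private lemma deriv_one_aux {Ω : Type*} [MeasurableSpace Ω] (P : Measure Ω)
    [IsProbabilityMeasure P] (V : Ω → ℝ) (hm : Measurable V)
    (hint : ∀ β : ℝ, Integrable (fun ω => Real.exp (β * V ω)) P) (t : ℝ) :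
    Integrable (fun ω => V ω * Real.exp (t * V ω)) P ∧
      HasDerivAt (fun u => ∫ ω, Real.exp (u * V ω) ∂P)
        (∫ ω, V ω * Real.exp (t * V ω) ∂P) t := by
  have h := hasDerivAt_integral_of_dominated_loc_of_deriv_le (𝕜 := ℝ) (μ := P)
      (F := fun u ω => Real.exp (u * V ω)) (F' := fun u ω => V ω * Real.exp (u * V ω))
      (x₀ := t)
      (bound := fun ω => 2 * (Real.exp ((t - 2) * V ω) + Real.exp ((t + 2) * V ω)))
      (s := Metric.ball t 1) (Metric.ball_mem_nhds t one_pos)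
      (Filter.Eventually.of_forall fun u =>
        ((measurable_const.mul hm).exp).aestronglyMeasurable)
      (hint t)
      ((hm.mul ((measurable_const.mul hm).exp)).aestronglyMeasurable)
      (Filter.Eventually.of_forall fun ω => ?_)
      (((hint (t - 2)).add (hint (t + 2))).const_mul 2)
      (Filter.Eventually.of_forall fun ω x _ => ?_)
  · exact ⟨h.1, h.2⟩
  · intro x hx
    rw [Real.norm_eq_abs, abs_mul, Real.abs_exp]
    have hx' : |x - t| < 1 := by simpa [Real.dist_eq] using hx
    have h1 : |V ω| * Real.exp (x * V ω) ≤
        (Real.exp (V ω) + Real.exp (-V ω)) * Real.exp (x * V ω) :=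
      mul_le_mul_of_nonneg_right (abs_le_exp_add_exp _) (Real.exp_pos _).le
    have h2 : (Real.exp (V ω) + Real.exp (-V ω)) * Real.exp (x * V ω)
        = Real.exp ((x + 1) * V ω) + Real.exp ((x - 1) * V ω) := by
      rw [add_mul, ← Real.exp_add, ← Real.exp_add]; ring_nf
    have hab := abs_lt.1 hx'
    have h3 : Real.exp ((x + 1) * V ω) ≤
        Real.exp ((t - 2) * V ω) + Real.exp ((t + 2) * V ω) :=
      exp_interval_bound (by linarith) (by linarith)
    have h4 : Real.exp ((x - 1) * V ω) ≤
        Real.exp ((t - 2) * V ω) + Real.exp ((t + 2) * V ω) :=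
      exp_interval_bound (by linarith) (by linarith)
    show _ ≤ 2 * (Real.exp ((t - 2) * V ω) + Real.exp ((t + 2) * V ω))
    linarith
  · have := (hasDerivAt_mul_const (V ω)).exp (x := x)
    simpa [mul_comm] using this

private lemma deriv_two {Ω : Type*} [MeasurableSpace Ω] (P : Measure Ω)
    [IsProbabilityMeasure P] (V : Ω → ℝ) (hm : Measurable V)
    (hint : ∀ β : ℝ, Integrable (fun ω => Real.exp (β * V ω)) P) (t : ℝ) :
    Integrable (fun ω => V ω ^ 2 * Real.exp (t * V ω)) P ∧
      HasDerivAt (fun u => ∫ ω, V ω * Real.exp (u * V ω) ∂P)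
        (∫ ω, V ω ^ 2 * Real.exp (t * V ω) ∂P) t := by
  have h := hasDerivAt_integral_of_dominated_loc_of_deriv_le (𝕜 := ℝ) (μ := P)
      (F := fun u ω => V ω * Real.exp (u * V ω))
      (F' := fun u ω => V ω ^ 2 * Real.exp (u * V ω))
      (x₀ := t)
      (bound := fun ω => 2 * (Real.exp ((t - 3) * V ω) + Real.exp ((t + 3) * V ω)))
      (s := Metric.ball t 1) (Metric.ball_mem_nhds t one_pos)
      (Filter.Eventually.of_forall fun u =>
        (hm.mul ((measurable_const.mul hm).exp)).aestronglyMeasurable)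
      (deriv_one_aux P V hm hint t).1
      (((hm.pow_const 2).mul ((measurable_const.mul hm).exp)).aestronglyMeasurable)
      (Filter.Eventually.of_forall fun ω x hx => ?_)
      (((hint (t - 3)).add (hint (t + 3))).const_mul 2)
      (Filter.Eventually.of_forall fun ω x _ => ?_)
  · exact ⟨h.1, h.2⟩
  · rw [Real.norm_eq_abs, abs_mul, Real.abs_exp, abs_of_nonneg (sq_nonneg (V ω))]
    have hx' : |x - t| < 1 := by simpa [Real.dist_eq] using hx
    have h1 : V ω ^ 2 * Real.exp (x * V ω) ≤
        (Real.exp (2 * V ω) + Real.exp (-(2 * V ω))) * Real.exp (x * V ω) :=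
      mul_le_mul_of_nonneg_right (sq_le_exp_add_exp _) (Real.exp_pos _).le
    have h2 : (Real.exp (2 * V ω) + Real.exp (-(2 * V ω))) * Real.exp (x * V ω)
        = Real.exp ((x + 2) * V ω) + Real.exp ((x - 2) * V ω) := by
      rw [add_mul, ← Real.exp_add, ← Real.exp_add]; ring_nf
    have hab := abs_lt.1 hx'
    have h3 : Real.exp ((x + 2) * V ω) ≤
        Real.exp ((t - 3) * V ω) + Real.exp ((t + 3) * V ω) :=
      exp_interval_bound (by linarith) (by linarith)
    have h4 : Real.exp ((x - 2) * V ω) ≤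
        Real.exp ((t - 3) * V ω) + Real.exp ((t + 3) * V ω) :=
      exp_interval_bound (by linarith) (by linarith)
    show _ ≤ 2 * (Real.exp ((t - 3) * V ω) + Real.exp ((t + 3) * V ω))
    linarith
  · have := ((hasDerivAt_mul_const (V ω)).exp (x := x)).const_mul (V ω)
    exact this.congr_deriv (by ring)


private lemma cs_strict {Ω : Type*} [MeasurableSpace Ω] (P : Measure Ω)
    [IsProbabilityMeasure P] (V : Ω → ℝ) (hm : Measurable V)
    (hnconst : ¬ ∃ c : ℝ, ∀ᵐ ω ∂P, V ω = c) (t : ℝ)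
    (h0 : Integrable (fun ω => Real.exp (t * V ω)) P)
    (h2 : Integrable (fun ω => V ω ^ 2 * Real.exp (t * V ω)) P) :
    (∫ ω, V ω * Real.exp (t * V ω) ∂P) ^ 2 <
      (∫ ω, V ω ^ 2 * Real.exp (t * V ω) ∂P) * ∫ ω, Real.exp (t * V ω) ∂P := by
  classical
  set g : Ω → ℝ := fun ω => Real.exp (t * V ω / 2) with hg
  set f : Ω → ℝ := fun ω => V ω * g ω with hf
  have hgsq : ∀ ω, g ω ^ 2 = Real.exp (t * V ω) := by
    intro ω; rw [sq, ← Real.exp_add]; congr 1; ring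
  have hfsq : ∀ ω, f ω ^ 2 = V ω ^ 2 * Real.exp (t * V ω) := by
    intro ω; simp only [hf]; rw [mul_pow, hgsq]
  have hfg : ∀ ω, f ω * g ω = V ω * Real.exp (t * V ω) := by
    intro ω; simp only [hf]; rw [mul_assoc, ← sq, hgsq]
  have hgm : AEStronglyMeasurable g P :=
    ((measurable_const.mul hm).div_const 2).exp.aestronglyMeasurable
  have hfm : AEStronglyMeasurable f P := (hm.aestronglyMeasurable.mul hgm)
  have hgL : MemLp g 2 P := (memLp_two_iff_integrable_sq hgm).2
    (h0.congr (Filter.Eventually.of_forall fun ω => (hgsq ω).symm))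
  have hfL : MemLp f 2 P := (memLp_two_iff_integrable_sq hfm).2
    (h2.congr (Filter.Eventually.of_forall fun ω => (hfsq ω).symm))
  set Fl : Lp ℝ 2 P := hfL.toLp f with hFl
  set Gl : Lp ℝ 2 P := hgL.toLp g with hGl
  have hinner : ∀ (A : Lp ℝ 2 P) (a : Ω → ℝ), A =ᵐ[P] a →
      ∀ (B : Lp ℝ 2 P) (b : Ω → ℝ), B =ᵐ[P] b →
      (inner ℝ A B : ℝ) = ∫ ω, a ω * b ω ∂P := by
    intro A a ha B b hb
    rw [MeasureTheory.L2.inner_def]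
    refine integral_congr_ae ?_
    filter_upwards [ha, hb] with ω h1 h2
    rw [h1, h2]; simp [RCLike.inner_apply]; ring
  have hFG : (inner ℝ Fl Gl : ℝ) = ∫ ω, V ω * Real.exp (t * V ω) ∂P := by
    rw [hinner Fl f hfL.coeFn_toLp Gl g hgL.coeFn_toLp]
    exact integral_congr_ae (Filter.Eventually.of_forall fun ω => hfg ω)
  have hFF : ‖Fl‖ ^ 2 = ∫ ω, V ω ^ 2 * Real.exp (t * V ω) ∂P := by
    rw [← real_inner_self_eq_norm_sq, hinner Fl f hfL.coeFn_toLp Fl f hfL.coeFn_toLp]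
    exact integral_congr_ae (Filter.Eventually.of_forall fun ω =>
      (by rw [← sq, hfsq] : f ω * f ω = V ω ^ 2 * Real.exp (t * V ω)))
  have hGG : ‖Gl‖ ^ 2 = ∫ ω, Real.exp (t * V ω) ∂P := by
    rw [← real_inner_self_eq_norm_sq, hinner Gl g hgL.coeFn_toLp Gl g hgL.coeFn_toLp]
    exact integral_congr_ae (Filter.Eventually.of_forall fun ω =>
      (by rw [← sq, hgsq] : g ω * g ω = Real.exp (t * V ω)))
  have hGpos : 0 < ‖Gl‖ := by
    have h1 : 0 < ∫ ω, Real.exp (t * V ω) ∂P := by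
      simpa [ProbabilityTheory.mgf] using ProbabilityTheory.mgf_pos (μ := P) (X := V) h0
    have h2 : 0 < ‖Gl‖ ^ 2 := hGG ▸ h1
    nlinarith [norm_nonneg Gl]
  -- the key: from a linear dependence, `V` would be a.s. constant
  have hdep : ∀ c₁ c₂ : ℝ, c₁ ≠ 0 → (c₁ • Fl = c₂ • Gl) → False := by
    intro c₁ c₂ hc₁ hEq
    apply hnconst
    refine ⟨c₂ / c₁, ?_⟩
    have h1 : ⇑(c₁ • Fl) =ᵐ[P] fun ω => c₁ * f ω := by
      filter_upwards [Lp.coeFn_smul c₁ Fl, hfL.coeFn_toLp] with ω ha hb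
      simp [ha, show (Fl : Ω → ℝ) ω = f ω from hb]
    have h2 : ⇑(c₂ • Gl) =ᵐ[P] fun ω => c₂ * g ω := by
      filter_upwards [Lp.coeFn_smul c₂ Gl, hgL.coeFn_toLp] with ω ha hb
      simp [ha, show (Gl : Ω → ℝ) ω = g ω from hb]
    have h3 : ∀ᵐ ω ∂P, c₁ * f ω = c₂ * g ω := by
      filter_upwards [h1, h2] with ω ha hb
      rw [← ha, ← hb, hEq]
    filter_upwards [h3] with ω hω
    have hgne : g ω ≠ 0 := (Real.exp_pos _).ne'
    have hω' : c₁ * (V ω * g ω) = c₂ * g ω := hω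
    have h4 : (c₁ * V ω - c₂) * g ω = 0 := by linear_combination hω'
    have h5 : c₁ * V ω - c₂ = 0 := by
      rcases mul_eq_zero.1 h4 with h | h
      · exact h
      · exact absurd h hgne
    rw [eq_div_iff hc₁]
    linarith
  have hlt : (inner ℝ Fl Gl : ℝ) < ‖Fl‖ * ‖Gl‖ := by
    refine inner_lt_norm_mul_iff_real.2 ?_
    intro hEq
    exact hdep ‖Gl‖ ‖Fl‖ hGpos.ne' hEq
  have hgt : -(‖Fl‖ * ‖Gl‖) < (inner ℝ Fl Gl : ℝ) := by
    have h1 : (inner ℝ (-Fl) Gl : ℝ) < ‖-Fl‖ * ‖Gl‖ := by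
      refine inner_lt_norm_mul_iff_real.2 ?_
      intro hEq
      have : (-‖Gl‖) • Fl = ‖-Fl‖ • Gl := by
        rw [← hEq]; rw [smul_neg, neg_smul]
      exact hdep (-‖Gl‖) ‖-Fl‖ (by simpa using hGpos.ne') this
    rw [inner_neg_left, norm_neg] at h1
    linarith [h1]
  have habs : (inner ℝ Fl Gl : ℝ) ^ 2 < (‖Fl‖ * ‖Gl‖) ^ 2 := by
    have hpos : 0 ≤ ‖Fl‖ * ‖Gl‖ := by positivity
    exact sq_lt_sq' hgt hlt
  calc (∫ ω, V ω * Real.exp (t * V ω) ∂P) ^ 2 = (inner ℝ Fl Gl : ℝ) ^ 2 := by rw [hFG]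
    _ < (‖Fl‖ * ‖Gl‖) ^ 2 := habs
    _ = ‖Fl‖ ^ 2 * ‖Gl‖ ^ 2 := by ring
    _ = _ := by rw [hFF, hGG]


/-- **Proposition 2.2** (ordering of the boundary curves of the phase diagram).
For every `β > β_c`, one has `F(β_c) = J(β_c) < J(β) < (φ(β) − log d₁)/β < F(β)`. -/
theorem boundary_curves_ordering
    {Ω : Type*} [MeasurableSpace Ω] (P : Measure Ω) [IsProbabilityMeasure P]
    (d d₁ : ℕ) (hd₁ : 2 ≤ d₁) (hd₁d : d₁ < d)
    -- the disorder variable `V`, not a.s. constant, with everywhere finite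
    -- cumulant generating function `λ`
    (V0 : Ω → ℝ) (hmeas0 : Measurable V0)
    (hnconst : ¬ ∃ c : ℝ, ∀ᵐ ω ∂P, V0 ω = c)
    (lam : ℝ → ℝ)
    (hint : ∀ β : ℝ, Integrable (fun ω => Real.exp (β * V0 ω)) P)
    (hlam : ∀ β : ℝ, lam β = Real.log (∫ ω, Real.exp (β * V0 ω) ∂P))
    -- the critical inverse temperature `β_c` and the quenched free energy `φ`
    (βc : ℝ) (hβc : 0 < βc)
    (hcrit : lam βc + Real.log d = βc * deriv lam βc)
    (phi : ℝ → ℝ)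
    (hphi : ∀ β : ℝ, phi β = if β < βc then lam β + Real.log d
      else (β / βc) * (lam βc + Real.log d))
    -- the boundary curves `F` and `J`
    (F : ℝ → ℝ) (hF : ∀ b : ℝ, F b = (lam b + Real.log d - Real.log d₁) / b)
    (J : ℝ → ℝ) (hJ : ∀ b : ℝ, J b = (1 / b) * (phi b - Real.log d₁ -
      (lam b + Real.log d - phi b) * Real.log d₁ / (lam (2 * b) - 2 * lam b - Real.log d)))
    (β : ℝ) (hβ : βc < β) :
    F βc = J βc ∧ J βc < J β ∧ J β < (phi β - Real.log d₁) / β ∧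
      (phi β - Real.log d₁) / β < F β := by
  -- Analytic facts about `lam`
  have hlamfun : lam = fun u => Real.log (∫ ω, Real.exp (u * V0 ω) ∂P) := funext hlam
  have Mpos : ∀ t : ℝ, 0 < ∫ ω, Real.exp (t * V0 ω) ∂P := fun t => by
    simpa [ProbabilityTheory.mgf] using ProbabilityTheory.mgf_pos (μ := P) (X := V0) (hint t)
  have hdL : ∀ t : ℝ, HasDerivAt lam
      ((∫ ω, V0 ω * Real.exp (t * V0 ω) ∂P) / ∫ ω, Real.exp (t * V0 ω) ∂P) t := by
    intro t
    rw [hlamfun]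
    exact ((deriv_one_aux P V0 hmeas0 hint t).2).log (Mpos t).ne'
  have hdiff : ∀ t : ℝ, DifferentiableAt ℝ lam t := fun t => (hdL t).differentiableAt
  have hderiveq : deriv lam = fun t =>
      (∫ ω, V0 ω * Real.exp (t * V0 ω) ∂P) / ∫ ω, Real.exp (t * V0 ω) ∂P :=
    funext fun t => (hdL t).deriv
  have hdd : ∀ t : ℝ, HasDerivAt (deriv lam)
      (((∫ ω, V0 ω ^ 2 * Real.exp (t * V0 ω) ∂P) * (∫ ω, Real.exp (t * V0 ω) ∂P) -
        (∫ ω, V0 ω * Real.exp (t * V0 ω) ∂P) * (∫ ω, V0 ω * Real.exp (t * V0 ω) ∂P)) /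
        (∫ ω, Real.exp (t * V0 ω) ∂P) ^ 2) t := by
    intro t
    rw [hderiveq]
    exact ((deriv_two P V0 hmeas0 hint t).2).div ((deriv_one_aux P V0 hmeas0 hint t).2) (Mpos t).ne'
  have h2pos : ∀ t : ℝ, 0 < (deriv^[2] lam) t := by
    intro t
    rw [Function.iterate_succ_apply', Function.iterate_one, (hdd t).deriv]
    have hcs := cs_strict P V0 hmeas0 hnconst t (hint t) (deriv_two P V0 hmeas0 hint t).1
    apply div_pos
    · nlinarith [hcs]
    · exact pow_pos (Mpos t) 2
  have hsc : StrictConvexOn ℝ Set.univ lam := by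
    have hcont : Continuous lam := Differentiable.continuous (fun t => hdiff t)
    exact strictConvexOn_univ_of_deriv2_pos hcont h2pos
  -- basic positivity
  have hβpos : 0 < β := hβc.trans hβ
  have hbc : 0 < β - βc := sub_pos.2 hβ
  have hld1 : 0 < Real.log d₁ := Real.log_pos (by exact_mod_cast Nat.one_lt_cast.2 (by omega))
  -- convexity inequalities
  have T3 : deriv lam βc * (β - βc) < lam β - lam βc := by
    have h := hsc.deriv_lt_slope (Set.mem_univ βc) (Set.mem_univ β) hβ (hdiff βc)
    rw [slope_def_field] at h
    exact (lt_div_iff₀ hbc).1 h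
  have T4 : lam β - lam βc < deriv lam β * (β - βc) := by
    have h := hsc.slope_lt_deriv (Set.mem_univ βc) (Set.mem_univ β) hβ (hdiff β)
    rw [slope_def_field] at h
    exact (div_lt_iff₀ hbc).1 h
  have T2 : deriv lam β * β < lam (2 * β) - lam β := by
    have h := hsc.deriv_lt_slope (Set.mem_univ β) (Set.mem_univ (2 * β))
      (by linarith) (hdiff β)
    rw [slope_def_field] at h
    have h2 : 2 * β - β = β := by ring
    rw [h2] at h
    exact (lt_div_iff₀ hβpos).1 h
  have hlclb : deriv lam βc < deriv lam β := lt_of_mul_lt_mul_right (T3.trans T4) hbc.le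
  -- values of phi
  have hphiβc : phi βc = lam βc + Real.log d := by
    rw [hphi, if_neg (lt_irrefl βc), div_self hβc.ne', one_mul]
  have hphiβ : phi β = β * deriv lam βc := by
    rw [hphi, if_neg (not_lt.2 hβ.le), hcrit]
    field_simp
  -- the main quantities
  have hE : 0 < lam β + Real.log d - phi β := by
    rw [hphiβ]
    nlinarith [T3, hcrit]
  have hD : βc * (deriv lam β - deriv lam βc) <
      lam (2 * β) - 2 * lam β - Real.log d := by
    nlinarith [T2, T4, hcrit]
  have hDpos : 0 < lam (2 * β) - 2 * lam β - Real.log d :=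
    (mul_pos hβc (sub_pos.2 hlclb)).trans hD
  have hkey : βc * (lam β + Real.log d - phi β) <
      (β - βc) * (lam (2 * β) - 2 * lam β - Real.log d) := by
    rw [hphiβ]
    have h1 := mul_lt_mul_of_pos_left T4 hβc
    have h2 := mul_lt_mul_of_pos_left hD hbc
    have h3 : βc * (lam βc + Real.log d) = βc * (βc * deriv lam βc) := by rw [hcrit]
    nlinarith [h1, h2, h3]
  -- Goal 1 : F βc = J βc
  refine ⟨?_, ?_, ?_, ?_⟩
  · rw [hF, hJ, hphiβc, sub_self, zero_mul, zero_div, sub_zero]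
    ring
  · -- J βc < J β
    rw [hJ, hJ, hphiβc, sub_self, zero_mul, zero_div, sub_zero]
    have hD0 : lam (2 * β) - 2 * lam β - Real.log d ≠ 0 := hDpos.ne'
    rw [← sub_pos]
    have key : 1 / β * (phi β - Real.log d₁ -
          (lam β + Real.log d - phi β) * Real.log d₁ /
            (lam (2 * β) - 2 * lam β - Real.log d)) -
        1 / βc * (lam βc + Real.log d - Real.log d₁) =
        (Real.log d₁ * ((β - βc) * (lam (2 * β) - 2 * lam β - Real.log d) -
          βc * (lam β + Real.log d - phi β)) +
          (βc * phi β - β * (lam βc + Real.log d)) *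
            (lam (2 * β) - 2 * lam β - Real.log d)) /
        (βc * β * (lam (2 * β) - 2 * lam β - Real.log d)) := by
      generalize lam (2 * β) - 2 * lam β - Real.log d = D at hD0 ⊢
      field_simp
      ring
    rw [key]
    apply div_pos
    · have hzero : βc * phi β - β * (lam βc + Real.log d) = 0 := by
        rw [hphiβ, hcrit]; ring
      rw [hzero, zero_mul, add_zero]
      exact mul_pos hld1 (sub_pos.2 hkey)
    · exact mul_pos (mul_pos hβc hβpos) hDpos
  · -- J β < (phi β - log d₁)/β
    rw [hJ]
    have hq : 0 < (lam β + Real.log d - phi β) * Real.log d₁ /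
        (lam (2 * β) - 2 * lam β - Real.log d) :=
      div_pos (mul_pos hE hld1) hDpos
    have h1 : (phi β - Real.log d₁) / β = 1 / β * (phi β - Real.log d₁) := by ring
    rw [h1]
    apply mul_lt_mul_of_pos_left _ (one_div_pos.2 hβpos)
    linarith
  · -- (phi β - log d₁)/β < F β
    rw [hF, div_lt_div_iff₀ hβpos hβpos]
    nlinarith [hE, hβpos, mul_pos hE hβpos]
end

section
/- For every β > 0 and every u ∈ ℝ, almost surely limsup_{n→∞} (1/n)·log Z_n^{ST}(β,u) ≤ max{λ(β) + log d, βu + log d₁}. (Proposition 2.4: annealed upper bound on the free energy of the subtree-defect model.) -/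
open MeasureTheory ProbabilityTheory Filter

private lemma mem_take_ofFn_iff {n d : ℕ} (w : Fin n → Fin d) (m : ℕ) (a : Fin d) :
    a ∈ (List.ofFn w).take m ↔ ∃ i : Fin n, (i : ℕ) < m ∧ w i = a := by
  constructor
  · intro h
    obtain ⟨j, hj, hja⟩ := List.mem_iff_getElem.1 h
    rw [List.length_take, List.length_ofFn] at hj
    have hjn : j < n := lt_of_lt_of_le hj (min_le_right _ _)
    have hjm : j < m := lt_of_lt_of_le hj (min_le_left _ _)
    refine ⟨⟨j, hjn⟩, hjm, ?_⟩
    rw [List.getElem_take] at hja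
    simpa [List.getElem_ofFn] using hja
  · rintro ⟨i, him, rfl⟩
    refine List.mem_iff_getElem.2 ⟨i, ?_, ?_⟩
    · rw [List.length_take, List.length_ofFn]; exact lt_min him i.isLt
    · rw [List.getElem_take]; simp

private lemma card_filter_val_lt_s10 (n j : ℕ) (hj : j ≤ n) :
    ((Finset.univ : Finset (Fin n)).filter fun i : Fin n => (i : ℕ) < j).card = j := by
  have h : ((Finset.univ : Finset (Fin n)).filter fun i : Fin n => (i : ℕ) < j)
      = Finset.map (Fin.castLEEmb hj) Finset.univ := by
    ext i
    simp only [Finset.mem_filter, Finset.mem_univ, true_and, Finset.mem_map]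
    constructor
    · intro hi
      exact ⟨⟨i, hi⟩, by simp [Fin.castLEEmb, Fin.castLE]⟩
    · rintro ⟨b, rfl⟩
      simp [Fin.castLEEmb, Fin.castLE]
  rw [h, Finset.card_map, Finset.card_univ, Fintype.card_fin]

private lemma card_Q_le (d d₁ n j : ℕ) (hd₁d : d₁ ≤ d) (hj : j ≤ n) :
    ((Finset.univ : Finset (Fin n → Fin d)).filter
        fun w => ∀ i : Fin n, (i : ℕ) < j → ((w i : ℕ) < d₁)).card ≤ d₁ ^ j * d ^ (n - j) := by
  classical
  set t : Fin n → Finset (Fin d) := fun i =>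
    if (i : ℕ) < j then Finset.univ.filter (fun a : Fin d => (a : ℕ) < d₁) else Finset.univ with ht
  have hsub : ((Finset.univ : Finset (Fin n → Fin d)).filter
      fun w => ∀ i : Fin n, (i:ℕ) < j → ((w i:ℕ) < d₁)) ⊆ Fintype.piFinset t := by
    intro w hw
    rw [Finset.mem_filter] at hw
    rw [Fintype.mem_piFinset]
    intro i
    by_cases h : (i : ℕ) < j
    · simp [ht, h, hw.2 i h]
    · simp [ht, h]
  refine le_trans (Finset.card_le_card hsub) ?_
  rw [Fintype.card_piFinset]
  have heq : ∀ i : Fin n, (t i).card = if (i : ℕ) < j then d₁ else d := by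
    intro i
    by_cases h : (i : ℕ) < j
    · simp only [ht, if_pos h]
      exact card_filter_val_lt_s10 d d₁ hd₁d
    · simp [ht, if_neg h]
  have hcneg : ((Finset.univ : Finset (Fin n)).filter fun i : Fin n => ¬ (i:ℕ) < j).card
      = n - j := by
    have h2 := Finset.card_filter_add_card_filter_not
      (s := (Finset.univ : Finset (Fin n))) (p := fun i : Fin n => (i : ℕ) < j)
    rw [card_filter_val_lt_s10 n j hj, Finset.card_univ, Fintype.card_fin] at h2
    omega
  calc (∏ i : Fin n, (t i).card) = ∏ i : Fin n, (if (i : ℕ) < j then d₁ else d) :=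
        Finset.prod_congr rfl fun i _ => heq i
    _ = d₁ ^ j * d ^ (n - j) := by
        rw [Finset.prod_ite, Finset.prod_const, Finset.prod_const, card_filter_val_lt_s10 n j hj, hcneg]
    _ ≤ d₁ ^ j * d ^ (n - j) := le_rfl

private lemma weight_integral' {Ω : Type*} [MeasurableSpace Ω] (P : Measure Ω)
    [IsProbabilityMeasure P] {d : ℕ}
    (V : List (Fin d) → Ω → ℝ) (V0 : Ω → ℝ)
    (hmeas : ∀ x, Measurable (V x)) (hmeas0 : Measurable V0)
    (hindep : iIndepFun V P)
    (hident : ∀ x : List (Fin d), x ≠ [] → Measure.map (V x) P = Measure.map V0 P)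
    (β : ℝ) (hβint : Integrable (fun ω => Real.exp (β * V0 ω)) P)
    (T : Finset (List (Fin d))) (hT : ∀ x ∈ T, x ≠ []) :
    Integrable (fun ω => Real.exp (β * ∑ x ∈ T, V x ω)) P ∧
    ∫ ω, Real.exp (β * ∑ x ∈ T, V x ω) ∂P = (∫ ω, Real.exp (β * V0 ω) ∂P) ^ T.card := by
  have hg : Measurable fun y : ℝ => Real.exp (β * y) := (measurable_const.mul measurable_id).exp
  have hint_x : ∀ x : List (Fin d), x ≠ [] → Integrable (fun ω => Real.exp (β * V x ω)) P := by
    intro x hx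
    have h0 : Integrable (fun y => Real.exp (β * y)) (P.map V0) := by
      rw [integrable_map_measure hg.aestronglyMeasurable hmeas0.aemeasurable]
      exact hβint
    rw [← hident x hx] at h0
    exact (integrable_map_measure hg.aestronglyMeasurable (hmeas x).aemeasurable).1 h0
  have hval_x : ∀ x : List (Fin d), x ≠ [] →
      ∫ ω, Real.exp (β * V x ω) ∂P = ∫ ω, Real.exp (β * V0 ω) ∂P := by
    intro x hx
    have h1 : ∫ ω, Real.exp (β * V x ω) ∂P = ∫ y, Real.exp (β * y) ∂(P.map (V x)) :=
      (integral_map (hmeas x).aemeasurable hg.aestronglyMeasurable).symm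
    rw [h1, hident x hx, integral_map hmeas0.aemeasurable hg.aestronglyMeasurable]
  have hfun : (fun ω => Real.exp (β * ∑ x ∈ T, V x ω))
      = fun ω => Real.exp (β * (∑ x ∈ T, V x) ω) := by
    funext ω; rw [Finset.sum_apply]
  constructor
  · rw [hfun]
    exact hindep.integrable_exp_mul_sum hmeas (fun x hx => hint_x x (hT x hx))
  · have hm := hindep.mgf_sum hmeas T (t := β)
    rw [mgf] at hm
    calc ∫ ω, Real.exp (β * ∑ x ∈ T, V x ω) ∂P
        = ∫ ω, Real.exp (β * (∑ x ∈ T, V x) ω) ∂P := by rw [hfun]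
      _ = ∏ x ∈ T, mgf (V x) P β := hm
      _ = (∫ ω, Real.exp (β * V0 ω) ∂P) ^ T.card := by
          rw [Finset.prod_congr rfl fun x hx => ?_, Finset.prod_const]
          rw [mgf]
          exact hval_x x (hT x hx)

/-- The defect count of a path. -/
noncomputable def Dc (d₁ n : ℕ) {d : ℕ} (w : Fin n → Fin d) : ℕ :=
  ((Finset.range n).filter
    (fun k => ∀ a ∈ (List.ofFn w).take (k + 1), (a : ℕ) < d₁)).card

private lemma Dc_le {d d₁ n : ℕ} (w : Fin n → Fin d) : Dc d₁ n w ≤ n :=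
  le_trans (Finset.card_filter_le _ _) (by simp)

private lemma Q_of_le_Dc {d d₁ n : ℕ} (w : Fin n → Fin d) {j : ℕ} (hj : j ≤ Dc d₁ n w) :
    ∀ i : Fin n, (i : ℕ) < j → ((w i : ℕ) < d₁) := by
  by_contra hcon
  push_neg at hcon
  obtain ⟨i, hij, hi⟩ := hcon
  have hsub : ((Finset.range n).filter
      (fun k => ∀ a ∈ (List.ofFn w).take (k + 1), (a : ℕ) < d₁)) ⊆ Finset.range (i : ℕ) := by
    intro k hk
    rw [Finset.mem_filter] at hk
    rw [Finset.mem_range]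
    by_contra hki
    push_neg at hki
    have : (w i : ℕ) < d₁ := hk.2 (w i) ((mem_take_ofFn_iff w (k+1) (w i)).2 ⟨i, by omega, rfl⟩)
    omega
  have := Finset.card_le_card hsub
  rw [Finset.card_range] at this
  unfold Dc at hj
  omega

private lemma exponent_split {d d₁ n : ℕ} [DecidableEq (List (Fin d))] (u : ℝ)
    {Ω : Type*} (V : List (Fin d) → Ω → ℝ) (w : Fin n → Fin d) (ω : Ω) :
    (∑ k ∈ Finset.range n,
      (if ∀ a ∈ (List.ofFn w).take (k + 1), (a : ℕ) < d₁ then u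
       else V ((List.ofFn w).take (k + 1)) ω))
    = (Dc d₁ n w) * u +
      ∑ x ∈ ((Finset.range n).filter
          (fun k => ¬ ∀ a ∈ (List.ofFn w).take (k + 1), (a : ℕ) < d₁)).image
          (fun k => (List.ofFn w).take (k + 1)), V x ω := by
  classical
  rw [Finset.sum_ite, Finset.sum_const, Dc, nsmul_eq_mul]
  congr 1
  rw [Finset.sum_image]
  intro k1 hk1 k2 hk2 h
  have h1 : ((List.ofFn w).take (k1 + 1)).length = k1 + 1 := by
    rw [List.length_take, List.length_ofFn]
    have := Finset.mem_range.1 (Finset.mem_filter.1 hk1).1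
    omega
  have h2 : ((List.ofFn w).take (k2 + 1)).length = k2 + 1 := by
    rw [List.length_take, List.length_ofFn]
    have := Finset.mem_range.1 (Finset.mem_filter.1 hk2).1
    omega
  simp only at h
  rw [h] at h1
  rw [h2] at h1
  omega

private lemma card_image_pre {d d₁ n : ℕ} [DecidableEq (List (Fin d))] (w : Fin n → Fin d) :
    (((Finset.range n).filter
        (fun k => ¬ ∀ a ∈ (List.ofFn w).take (k + 1), (a : ℕ) < d₁)).image
        (fun k => (List.ofFn w).take (k + 1))).card = n - Dc d₁ n w := by
  classical
  rw [Finset.card_image_of_injOn]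
  · have h2 := Finset.card_filter_add_card_filter_not
      (s := Finset.range n) (p := fun k => ∀ a ∈ (List.ofFn w).take (k + 1), (a : ℕ) < d₁)
    rw [Finset.card_range] at h2
    unfold Dc
    omega
  · intro k1 hk1 k2 hk2 h
    simp only [Finset.coe_filter, Set.mem_setOf_eq, Finset.mem_range] at hk1 hk2
    have h1 : ((List.ofFn w).take (k1 + 1)).length = k1 + 1 := by
      rw [List.length_take, List.length_ofFn]; omega
    have h2 : ((List.ofFn w).take (k2 + 1)).length = k2 + 1 := by
      rw [List.length_take, List.length_ofFn]; omega
    simp only at h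
    rw [h] at h1
    rw [h2] at h1
    omega

private lemma term_bound_s10 {c : ℝ} (hc : 0 < c) (d d₁ : ℕ) (hd : 2 ≤ d) (hd₁ : 1 ≤ d₁)
    (β u : ℝ) (n D : ℕ) (hD : D ≤ n) :
    Real.exp (β * (D * u)) * c ^ (n - D) ≤
      Real.exp (n * max (Real.log c + Real.log d) (β * u + Real.log d₁)) /
        (d₁ ^ D * d ^ (n - D)) := by
  have hdpos : (0:ℝ) < d := by exact_mod_cast lt_of_lt_of_le (by norm_num) hd
  have hd₁pos : (0:ℝ) < d₁ := by exact_mod_cast hd₁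
  set L := Real.log c with hL
  set M := max (L + Real.log d) (β * u + Real.log d₁) with hM
  have h1 : β * u ≤ M - Real.log d₁ := by
    have := le_max_right (L + Real.log d) (β * u + Real.log d₁); linarith
  have h2 : L ≤ M - Real.log d := by
    have := le_max_left (L + Real.log d) (β * u + Real.log d₁); linarith
  have hab : (D:ℝ) + ((n-D:ℕ):ℝ) = n := by rw [Nat.cast_sub hD]; ring
  have hc' : c ^ (n - D) = Real.exp (((n-D:ℕ):ℝ) * L) := by
    rw [Real.exp_nat_mul, Real.exp_log hc]
  have hlhs : Real.exp (β * (D*u)) * c ^ (n-D)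
      = Real.exp ((D:ℝ)*(β*u) + ((n-D:ℕ):ℝ)*L) := by
    rw [hc', ← Real.exp_add]; ring_nf
  have hden : Real.exp ((D:ℝ)*Real.log d₁ + ((n-D:ℕ):ℝ)*Real.log d)
      = (d₁:ℝ)^D * (d:ℝ)^(n-D) := by
    rw [Real.exp_add, Real.exp_nat_mul, Real.exp_nat_mul, Real.exp_log hd₁pos,
      Real.exp_log hdpos]
  rw [hlhs, ← hden, ← Real.exp_sub]
  rw [Real.exp_le_exp]
  have t1 : (D:ℝ)*(β*u) ≤ (D:ℝ)*(M - Real.log d₁) :=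
    mul_le_mul_of_nonneg_left h1 (Nat.cast_nonneg D)
  have t2 : ((n-D:ℕ):ℝ)*L ≤ ((n-D:ℕ):ℝ)*(M - Real.log d) :=
    mul_le_mul_of_nonneg_left h2 (Nat.cast_nonneg _)
  have t3 : ((D:ℝ) + ((n-D:ℕ):ℝ)) * M = (n:ℝ) * M := by rw [hab]
  ring_nf at t1 t2 t3 ⊢
  linarith [t1, t2, t3]

private lemma sum_bound (d d₁ n : ℕ) (hd : 2 ≤ d) (hd₁ : 1 ≤ d₁) (hd₁d : d₁ < d) :
    ∑ w : Fin n → Fin d, (1:ℝ) / (d₁ ^ (Dc d₁ n w) * d ^ (n - Dc d₁ n w)) ≤ (n+1:ℝ) := by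
  classical
  have hdpos : (0:ℝ) < d := by exact_mod_cast lt_of_lt_of_le (by norm_num) hd
  have hd₁pos : (0:ℝ) < d₁ := by exact_mod_cast hd₁
  have hterm : ∀ w : Fin n → Fin d, (1:ℝ)/(d₁ ^ Dc d₁ n w * d ^ (n - Dc d₁ n w))
      ≤ ∑ j ∈ Finset.range (n+1), (if ∀ i : Fin n, (i:ℕ) < j → ((w i:ℕ) < d₁)
          then (1:ℝ)/(d₁^j * d^(n-j)) else 0) := by
    intro w
    have hDle := Dc_le (d₁ := d₁) w
    have hQ := Q_of_le_Dc w (le_refl (Dc d₁ n w))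
    have hs := Finset.single_le_sum
      (f := fun j => if ∀ i : Fin n, (i:ℕ) < j → ((w i:ℕ) < d₁)
          then (1:ℝ)/(d₁^j * d^(n-j)) else 0)
      (fun j _ => by positivity) (Finset.mem_range.2 (Nat.lt_succ_of_le hDle))
    rwa [if_pos hQ] at hs
  refine le_trans (Finset.sum_le_sum fun w _ => hterm w) ?_
  rw [Finset.sum_comm]
  calc (∑ j ∈ Finset.range (n+1), ∑ w : Fin n → Fin d,
        (if ∀ i : Fin n, (i:ℕ) < j → ((w i:ℕ) < d₁) then (1:ℝ)/(d₁^j * d^(n-j)) else 0))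
      ≤ ∑ j ∈ Finset.range (n+1), (1:ℝ) := by
        refine Finset.sum_le_sum fun j hj => ?_
        have hjn : j ≤ n := by have := Finset.mem_range.1 hj; omega
        rw [← Finset.sum_filter, Finset.sum_const, nsmul_eq_mul]
        have hcard : ((((Finset.univ : Finset (Fin n → Fin d)).filter
            fun w => ∀ i : Fin n, (i:ℕ) < j → ((w i:ℕ) < d₁)).card : ℝ))
            ≤ ((d₁ ^ j * d ^ (n-j) : ℕ) : ℝ) := by
          exact_mod_cast card_Q_le d d₁ n j (le_of_lt hd₁d) hjn
        have hpos : (0:ℝ) < (d₁:ℝ)^j * (d:ℝ)^(n-j) := by positivity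
        calc ((((Finset.univ : Finset (Fin n → Fin d)).filter
              fun w => ∀ i : Fin n, (i:ℕ) < j → ((w i:ℕ) < d₁)).card : ℝ))
              * ((1:ℝ)/(d₁^j * d^(n-j)))
            ≤ ((d₁:ℝ)^j * (d:ℝ)^(n-j)) * ((1:ℝ)/((d₁:ℝ)^j * (d:ℝ)^(n-j))) := by
              refine mul_le_mul_of_nonneg_right ?_ (by positivity)
              push_cast at hcard ⊢
              exact hcard
          _ = 1 := mul_one_div_cancel hpos.ne'
      _ = (n+1:ℝ) := by simp

private lemma Zn_bound {Ω : Type*} [MeasurableSpace Ω] (P : Measure Ω)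
    [IsProbabilityMeasure P] {d d₁ : ℕ} (hd : 2 ≤ d) (hd₁ : 1 ≤ d₁) (hd₁d : d₁ < d)
    (V : List (Fin d) → Ω → ℝ) (V0 : Ω → ℝ)
    (hmeas : ∀ x, Measurable (V x)) (hmeas0 : Measurable V0)
    (hindep : iIndepFun V P)
    (hident : ∀ x : List (Fin d), x ≠ [] → Measure.map (V x) P = Measure.map V0 P)
    (β u : ℝ) (hβint : Integrable (fun ω => Real.exp (β * V0 ω)) P) (n : ℕ) :
    Integrable (fun ω => ∑ w : Fin n → Fin d, Real.exp (β * ∑ k ∈ Finset.range n,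
        (if ∀ a ∈ (List.ofFn w).take (k + 1), (a : ℕ) < d₁ then u
         else V ((List.ofFn w).take (k + 1)) ω))) P ∧
    ∫ ω, (∑ w : Fin n → Fin d, Real.exp (β * ∑ k ∈ Finset.range n,
        (if ∀ a ∈ (List.ofFn w).take (k + 1), (a : ℕ) < d₁ then u
         else V ((List.ofFn w).take (k + 1)) ω))) ∂P
      ≤ (n+1:ℝ) * Real.exp (n * max (Real.log (∫ ω, Real.exp (β * V0 ω) ∂P) + Real.log d)
          (β * u + Real.log d₁)) := by
  classical
  set c : ℝ := ∫ ω, Real.exp (β * V0 ω) ∂P with hc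
  have hcpos : 0 < c := by
    rw [hc, integral_pos_iff_support_of_nonneg (fun ω => (Real.exp_pos _).le) hβint]
    have hs : Function.support (fun ω => Real.exp (β * V0 ω)) = Set.univ := by
      ext ω; simp [Real.exp_ne_zero]
    rw [hs]
    simp
  set M : ℝ := max (Real.log c + Real.log d) (β * u + Real.log d₁) with hM
  set T : (Fin n → Fin d) → Finset (List (Fin d)) := fun w =>
    ((Finset.range n).filter
        (fun k => ¬ ∀ a ∈ (List.ofFn w).take (k + 1), (a : ℕ) < d₁)).image
        (fun k => (List.ofFn w).take (k + 1)) with hT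
  have hTnil : ∀ w, ∀ x ∈ T w, x ≠ [] := by
    intro w x hx
    obtain ⟨k, hk, rfl⟩ := Finset.mem_image.1 hx
    have hkn : k < n := Finset.mem_range.1 (Finset.mem_filter.1 hk).1
    apply List.ne_nil_of_length_pos
    rw [List.length_take, List.length_ofFn]
    omega
  have hwi := fun w => weight_integral' P V V0 hmeas hmeas0 hindep hident β hβint (T w) (hTnil w)
  have hweq : ∀ w : Fin n → Fin d, (fun ω => Real.exp (β * ∑ k ∈ Finset.range n,
      (if ∀ a ∈ (List.ofFn w).take (k + 1), (a : ℕ) < d₁ then u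
       else V ((List.ofFn w).take (k + 1)) ω)))
      = fun ω => Real.exp (β * ((Dc d₁ n w : ℝ) * u)) * Real.exp (β * ∑ x ∈ T w, V x ω) := by
    intro w
    funext ω
    rw [exponent_split u V w ω, mul_add, Real.exp_add]
  have hint_w : ∀ w : Fin n → Fin d, Integrable (fun ω => Real.exp (β * ∑ k ∈ Finset.range n,
      (if ∀ a ∈ (List.ofFn w).take (k + 1), (a : ℕ) < d₁ then u
       else V ((List.ofFn w).take (k + 1)) ω))) P := by
    intro w
    rw [hweq w]
    exact ((hwi w).1).const_mul _
  constructor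
  · exact integrable_finset_sum _ (fun w _ => hint_w w)
  · rw [integral_finset_sum _ (fun w _ => hint_w w)]
    have hval : ∀ w : Fin n → Fin d, ∫ ω, Real.exp (β * ∑ k ∈ Finset.range n,
        (if ∀ a ∈ (List.ofFn w).take (k + 1), (a : ℕ) < d₁ then u
         else V ((List.ofFn w).take (k + 1)) ω)) ∂P
        = Real.exp (β * ((Dc d₁ n w : ℝ) * u)) * c ^ (n - Dc d₁ n w) := by
      intro w
      rw [hweq w, integral_const_mul, (hwi w).2, ← hc]
      congr 2
      exact card_image_pre w
    calc (∑ w : Fin n → Fin d, ∫ ω, Real.exp (β * ∑ k ∈ Finset.range n,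
          (if ∀ a ∈ (List.ofFn w).take (k + 1), (a : ℕ) < d₁ then u
           else V ((List.ofFn w).take (k + 1)) ω)) ∂P)
        = ∑ w : Fin n → Fin d, Real.exp (β * ((Dc d₁ n w : ℝ) * u)) * c ^ (n - Dc d₁ n w) :=
          Finset.sum_congr rfl fun w _ => hval w
      _ ≤ ∑ w : Fin n → Fin d, Real.exp ((n:ℝ) * M) *
            ((1:ℝ) / (d₁ ^ (Dc d₁ n w) * d ^ (n - Dc d₁ n w))) := by
          refine Finset.sum_le_sum fun w _ => ?_
          have := term_bound_s10 hcpos d d₁ hd hd₁ β u n (Dc d₁ n w) (Dc_le w)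
          rw [div_eq_mul_one_div] at this
          exact this
      _ = Real.exp ((n:ℝ) * M) *
            ∑ w : Fin n → Fin d, (1:ℝ) / (d₁ ^ (Dc d₁ n w) * d ^ (n - Dc d₁ n w)) := by
          rw [Finset.mul_sum]
      _ ≤ Real.exp ((n:ℝ) * M) * (n+1:ℝ) :=
          mul_le_mul_of_nonneg_left (sum_bound d d₁ n hd hd₁ hd₁d) (Real.exp_nonneg _)
      _ = (n+1:ℝ) * Real.exp ((n:ℝ) * M) := mul_comm _ _

/-- **Proposition 2.4** (annealed upper bound on the free energy of the subtree-defect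
model). For every `β > 0` and every `u`, almost surely
`limsup (1/n) log Z_n^{ST}(β,u) ≤ max {λ(β) + log d, βu + log d₁}`. -/
theorem subtree_free_energy_upper_bound
    {Ω : Type*} [MeasurableSpace Ω] (P : Measure Ω) [IsProbabilityMeasure P]
    (d d₁ : ℕ) (hd : 2 ≤ d) (hd₁ : 1 ≤ d₁) (hd₁d : d₁ < d)
    -- the i.i.d. bulk disorder, indexed by the nonempty lists over `Fin d`
    (V : List (Fin d) → Ω → ℝ) (V0 : Ω → ℝ)
    (hmeas : ∀ x, Measurable (V x)) (hmeas0 : Measurable V0)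
    (hindep : iIndepFun V P)
    (hident : ∀ x : List (Fin d), x ≠ [] → Measure.map (V x) P = Measure.map V0 P)
    -- the cumulant generating function `λ`, finite everywhere
    (lam : ℝ → ℝ)
    (hint : ∀ β : ℝ, Integrable (fun ω => Real.exp (β * V0 ω)) P)
    (hlam : ∀ β : ℝ, lam β = Real.log (∫ ω, Real.exp (β * V0 ω) ∂P))
    -- the partition function of the subtree-defect model
    (Z : ℕ → ℝ → ℝ → Ω → ℝ)
    (hZ : ∀ (n : ℕ) (β u : ℝ) (ω : Ω), Z n β u ω =
      ∑ w : Fin n → Fin d, Real.exp (β * ∑ k ∈ Finset.range n,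
        (if ∀ a ∈ (List.ofFn w).take (k + 1), (a : ℕ) < d₁ then u
         else V ((List.ofFn w).take (k + 1)) ω)))
    (β u : ℝ) (hβ : 0 < β) :
    ∀ᵐ ω ∂P, (Filter.limsup (fun n : ℕ => (1 / (n : ℝ)) * Real.log (Z n β u ω)) Filter.atTop) ≤
      max (lam β + Real.log d) (β * u + Real.log d₁) := by
  classical
  haveI : Nonempty (Fin d) := ⟨⟨0, by omega⟩⟩
  set M : ℝ := max (lam β + Real.log d) (β * u + Real.log d₁) with hMdef
  have hMeq : M = max (Real.log (∫ ω, Real.exp (β * V0 ω) ∂P) + Real.log d)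
      (β * u + Real.log d₁) := by rw [hMdef, hlam β]
  have hZn := fun n => Zn_bound P hd hd₁ hd₁d V V0 hmeas hmeas0 hindep hident β u (hint β) n
  have hZfun : ∀ n, Z n β u = fun ω => ∑ w : Fin n → Fin d,
      Real.exp (β * ∑ k ∈ Finset.range n,
        (if ∀ a ∈ (List.ofFn w).take (k + 1), (a : ℕ) < d₁ then u
         else V ((List.ofFn w).take (k + 1)) ω)) := fun n => funext (hZ n β u)
  have hZint : ∀ n, Integrable (Z n β u) P := by
    intro n; rw [hZfun n]; exact (hZn n).1
  have hZbound : ∀ n, ∫ ω, Z n β u ω ∂P ≤ (n+1:ℝ) * Real.exp (n * M) := by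
    intro n
    rw [hMeq, hZfun n]
    exact (hZn n).2
  have hZpos : ∀ n ω, 0 < Z n β u ω := by
    intro n ω
    rw [hZ n β u ω]
    exact Finset.sum_pos (fun w _ => Real.exp_pos _) Finset.univ_nonempty
  have hZlower : ∀ (n : ℕ) (ω : Ω), Real.exp (β * ((n:ℝ) * u)) ≤ Z n β u ω := by
    intro n ω
    rw [hZ n β u ω]
    set w0 : Fin n → Fin d := fun _ => ⟨0, by omega⟩ with hw0
    have hs := Finset.single_le_sum
      (f := fun w : Fin n → Fin d => Real.exp (β * ∑ k ∈ Finset.range n,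
        (if ∀ a ∈ (List.ofFn w).take (k + 1), (a : ℕ) < d₁ then u
         else V ((List.ofFn w).take (k + 1)) ω)))
      (fun w _ => (Real.exp_nonneg _)) (Finset.mem_univ w0)
    refine le_trans (le_of_eq ?_) hs
    congr 1
    have hcond : ∀ k ∈ Finset.range n,
        (if ∀ a ∈ (List.ofFn w0).take (k + 1), (a : ℕ) < d₁ then u
         else V ((List.ofFn w0).take (k + 1)) ω) = u := by
      intro k _
      rw [if_pos]
      intro a ha
      obtain ⟨i, hi, rfl⟩ := (mem_take_ofFn_iff w0 (k+1) a).1 ha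
      simp [hw0]; omega
    rw [Finset.sum_congr rfl hcond, Finset.sum_const, Finset.card_range, nsmul_eq_mul]
  have hstep : ∀ ε : ℝ, 0 < ε →
      ∀ᵐ ω ∂P, Filter.limsup (fun n : ℕ => (1 / (n:ℝ)) * Real.log (Z n β u ω)) atTop
        ≤ M + ε := by
    intro ε hε
    set p : ℕ → Ω → Prop := fun n ω => Real.exp ((n:ℝ) * (M + ε)) ≤ Z n β u ω with hp
    have hmeasP : ∀ n, P {ω | p n ω} ≤ ENNReal.ofReal (((n:ℝ)+1) * Real.exp (-((n:ℝ) * ε))) := by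
      intro n
      have hnonneg : 0 ≤ᵐ[P] Z n β u := ae_of_all _ fun ω => (hZpos n ω).le
      have h1 := mul_meas_ge_le_integral_of_nonneg hnonneg (hZint n) (Real.exp ((n:ℝ) * (M+ε)))
      have h2 : Real.exp ((n:ℝ) * (M+ε)) * (P {ω | p n ω}).toReal
          ≤ ((n:ℝ)+1) * Real.exp ((n:ℝ) * M) := le_trans h1 (hZbound n)
      have hexp : (0:ℝ) < Real.exp ((n:ℝ)*(M+ε)) := Real.exp_pos _
      have hkey : ((n:ℝ)+1) * Real.exp ((n:ℝ)*M)
          = Real.exp ((n:ℝ)*(M+ε)) * (((n:ℝ)+1) * Real.exp (-((n:ℝ)*ε))) := by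
        rw [show Real.exp ((n:ℝ)*(M+ε)) * (((n:ℝ)+1) * Real.exp (-((n:ℝ)*ε)))
            = ((n:ℝ)+1) * (Real.exp ((n:ℝ)*(M+ε)) * Real.exp (-((n:ℝ)*ε))) from by ring,
          ← Real.exp_add]
        ring_nf
      rw [hkey] at h2
      have h3 : (P {ω | p n ω}).toReal ≤ ((n:ℝ)+1) * Real.exp (-((n:ℝ)*ε)) :=
        le_of_mul_le_mul_left h2 hexp
      exact (ENNReal.le_ofReal_iff_toReal_le (measure_ne_top P _) (by positivity)).2 h3
    have hsummable : Summable (fun n : ℕ => ((n:ℝ)+1) * Real.exp (-((n:ℝ) * ε))) := by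
      have hr : ‖Real.exp (-ε)‖ < 1 := by
        rw [Real.norm_eq_abs, abs_of_pos (Real.exp_pos _)]
        exact Real.exp_lt_one_iff.2 (by linarith)
      have h1 : Summable (fun n : ℕ => (n:ℝ)^1 * Real.exp (-ε)^n) :=
        summable_pow_mul_geometric_of_norm_lt_one 1 hr
      have h2 : Summable (fun n : ℕ => Real.exp (-ε)^n) := summable_geometric_of_norm_lt_one hr
      refine (h1.add h2).congr fun n => ?_
      rw [show -((n:ℝ)*ε) = (n:ℝ) * (-ε) by ring, Real.exp_nat_mul]
      ring
    have htsum : (∑' n, P {ω | p n ω}) ≠ ⊤ := by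
      refine ne_top_of_le_ne_top ?_ (ENNReal.tsum_le_tsum hmeasP)
      rw [← ENNReal.ofReal_tsum_of_nonneg (fun n => by positivity) hsummable]
      exact ENNReal.ofReal_ne_top
    have h0 := measure_setOf_frequently_eq_zero (μ := P) htsum
    have hae : ∀ᵐ ω ∂P, ∀ᶠ n in atTop, ¬ p n ω := by
      have h4 : ∀ᵐ ω ∂P, ¬ ∃ᶠ n in atTop, p n ω := by
        rw [ae_iff]
        simpa only [not_not] using h0
      filter_upwards [h4] with ω hω
      exact Filter.not_frequently.1 hω
    filter_upwards [hae] with ω hω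
    have hub : ∀ᶠ (n : ℕ) in atTop, (1/(n:ℝ)) * Real.log (Z n β u ω) ≤ M + ε := by
      filter_upwards [hω, Filter.eventually_ge_atTop 1] with n hn hn1
      have hZle : Z n β u ω ≤ Real.exp ((n:ℝ) * (M+ε)) := le_of_not_ge hn
      have hlog : Real.log (Z n β u ω) ≤ (n:ℝ) * (M+ε) := by
        calc Real.log (Z n β u ω) ≤ Real.log (Real.exp ((n:ℝ)*(M+ε))) :=
              Real.log_le_log (hZpos n ω) hZle
          _ = (n:ℝ) * (M+ε) := Real.log_exp _
      have hnpos : (0:ℝ) < n := by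
        have h5 : (1:ℝ) ≤ n := by exact_mod_cast hn1
        linarith
      calc (1/(n:ℝ)) * Real.log (Z n β u ω) ≤ (1/(n:ℝ)) * ((n:ℝ)*(M+ε)) :=
            mul_le_mul_of_nonneg_left hlog (by positivity)
        _ = M + ε := by field_simp
    have hlb : ∀ᶠ (n : ℕ) in atTop, β * u ≤ (1/(n:ℝ)) * Real.log (Z n β u ω) := by
      filter_upwards [Filter.eventually_ge_atTop 1] with n hn1
      have hnpos : (0:ℝ) < n := by
        have h5 : (1:ℝ) ≤ n := by exact_mod_cast hn1
        linarith
      have hlog : β * ((n:ℝ) * u) ≤ Real.log (Z n β u ω) := by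
        calc β * ((n:ℝ)*u) = Real.log (Real.exp (β * ((n:ℝ)*u))) := (Real.log_exp _).symm
          _ ≤ Real.log (Z n β u ω) := Real.log_le_log (Real.exp_pos _) (hZlower n ω)
      calc β * u = (1/(n:ℝ)) * (β * ((n:ℝ)*u)) := by field_simp
        _ ≤ (1/(n:ℝ)) * Real.log (Z n β u ω) :=
            mul_le_mul_of_nonneg_left hlog (by positivity)
    exact Filter.limsup_le_of_le (Filter.isCoboundedUnder_le_of_eventually_le atTop hlb) hub
  have hall : ∀ᵐ ω ∂P, ∀ m : ℕ,
      Filter.limsup (fun n : ℕ => (1/(n:ℝ)) * Real.log (Z n β u ω)) atTop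
        ≤ M + 1/((m:ℝ)+1) := ae_all_iff.2 fun m => hstep _ (by positivity)
  filter_upwards [hall] with ω hω
  refine le_of_forall_pos_le_add fun ε hε => ?_
  obtain ⟨m, hm⟩ := exists_nat_one_div_lt hε
  exact (hω m).trans (by linarith)
end

section
/- For every β > 0, the limit lim_{n→∞} (Var(e^{βV*}·Z_n^{HD}(β)))^{1/n} exists and equals max{d²·e^{2λ(β)}, d·e^{λ(2β)}}. (Lemma 2.6(a): exponential growth rate of the variance of the weighted homogeneous partition function.) -/
open MeasureTheory ProbabilityTheory Filter


section AuxDefs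

/-- counting functions agreeing with `g` on the first `m` coordinates -/
lemma aux_count {n d : ℕ} (m : ℕ) (hm : m ≤ n) (g : Fin n → Fin d) :
    (Finset.univ.filter
      (fun w' : Fin n → Fin d => ∀ i : Fin n, (i : ℕ) < m → w' i = g i)).card = d ^ (n - m) := by
  classical
  have hset : Finset.univ.filter
      (fun w' : Fin n → Fin d => ∀ i : Fin n, (i : ℕ) < m → w' i = g i)
      = Fintype.piFinset (fun i : Fin n => if (i : ℕ) < m then {g i} else Finset.univ) := by
    ext w'
    simp only [Finset.mem_filter, Finset.mem_univ, true_and, Fintype.mem_piFinset]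
    constructor
    · intro h i
      by_cases hi : (i : ℕ) < m
      · simp [hi, h i hi]
      · simp [hi]
    · intro h i hi
      have := h i
      simpa [hi] using this
  rw [hset, Fintype.card_piFinset]
  have : ∀ i : Fin n, ((if (i : ℕ) < m then ({g i} : Finset (Fin d)) else Finset.univ)).card
      = if (i : ℕ) < m then 1 else d := by
    intro i
    by_cases hi : (i : ℕ) < m <;> simp [hi]
  rw [Finset.prod_congr rfl (fun i _ => this i)]
  rw [Fin.prod_univ_eq_prod_range (fun k => if k < m then 1 else d) n]
  rw [Finset.range_eq_Ico, ← Finset.prod_Ico_consecutive _ (Nat.zero_le m) hm]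
  have h1 : ∀ k ∈ Finset.Ico 0 m, (if k < m then 1 else d) = 1 := by
    intro k hk; simp [Finset.mem_Ico.mp hk |>.2]
  have h2 : ∀ k ∈ Finset.Ico m n, (if k < m then 1 else d) = d := by
    intro k hk
    have := (Finset.mem_Ico.mp hk).1
    simp [Nat.not_lt.mpr this]
  rw [Finset.prod_congr rfl h1, Finset.prod_congr rfl h2, Finset.prod_const_one,
    Finset.prod_const, one_mul, Nat.card_Ico]

/-- equality of length-`(k+1)` prefixes -/
lemma aux_take_eq_iff {n d : ℕ} {k : ℕ} (hk : k < n) (w w' : Fin n → Fin d) :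
    (List.ofFn w).take (k + 1) = (List.ofFn w').take (k + 1)
      ↔ ∀ i : Fin n, (i : ℕ) < k + 1 → w i = w' i := by
  have hlen : ∀ (v : Fin n → Fin d), ((List.ofFn v).take (k + 1)).length = k + 1 := by
    intro v; simp [List.length_take]; omega
  constructor
  · intro h i hi
    have h1 : (i : ℕ) < ((List.ofFn w).take (k + 1)).length := by rw [hlen]; exact hi
    have h2 : (i : ℕ) < ((List.ofFn w').take (k + 1)).length := by rw [hlen]; exact hi
    have := List.getElem_of_eq h h1
    rw [List.getElem_take, List.getElem_take] at this
    rw [List.getElem_ofFn, List.getElem_ofFn] at this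
    simpa using this
  · intro h
    apply List.ext_getElem
    · rw [hlen, hlen]
    · intro i h1 h2
      rw [List.getElem_take, List.getElem_take, List.getElem_ofFn, List.getElem_ofFn]
      have hi : i < k + 1 := by rw [hlen] at h1; exact h1
      have hin : i < n := by omega
      exact h ⟨i, hin⟩ hi

/-- a downward-closed subset of `range n` is an initial segment -/
lemma aux_init_seg {A : Finset ℕ} {n : ℕ} (_hA : A ⊆ Finset.range n)
    (hdc : ∀ k ∈ A, ∀ j, j ≤ k → j ∈ A) (j : ℕ) : j < A.card ↔ j ∈ A := by
  constructor
  · intro hj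
    by_contra hjA
    have hsub : A ⊆ Finset.range j := by
      intro k hk
      rw [Finset.mem_range]
      by_contra hkj
      exact hjA (hdc k hk j (Nat.le_of_not_lt hkj))
    have := Finset.card_le_card hsub
    rw [Finset.card_range] at this
    omega
  · intro hj
    have hsub : Finset.range (j + 1) ⊆ A := by
      intro i hi
      exact hdc j hj i (Nat.lt_succ_iff.mp (Finset.mem_range.mp hi))
    have := Finset.card_le_card hsub
    rw [Finset.card_range] at this
    omega

def prefCount {d n : ℕ} (w w' : Fin n → Fin d) : ℕ :=
  ((Finset.range n).filter
    (fun k => (List.ofFn w).take (k + 1) = (List.ofFn w').take (k + 1))).card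

lemma prefCount_le {d n : ℕ} (w w' : Fin n → Fin d) : prefCount w w' ≤ n :=
  le_trans (Finset.card_filter_le _ _) (le_of_eq (Finset.card_range n))

lemma prefCount_lt_iff {d n : ℕ} (w w' : Fin n → Fin d) {j : ℕ} (hj : j < n) :
    j < prefCount w w' ↔ ∀ i : Fin n, (i : ℕ) < j + 1 → w i = w' i := by
  have hA : ((Finset.range n).filter
      (fun k => (List.ofFn w).take (k + 1) = (List.ofFn w').take (k + 1)))
        ⊆ Finset.range n := Finset.filter_subset _ _
  have hdc : ∀ k ∈ (Finset.range n).filter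
      (fun k => (List.ofFn w).take (k + 1) = (List.ofFn w').take (k + 1)),
      ∀ j', j' ≤ k → j' ∈ (Finset.range n).filter
      (fun k => (List.ofFn w).take (k + 1) = (List.ofFn w').take (k + 1)) := by
    intro k hk j' hj'
    rw [Finset.mem_filter, Finset.mem_range] at hk
    obtain ⟨hkn, hkeq⟩ := hk
    have hj'n : j' < n := lt_of_le_of_lt hj' hkn
    rw [Finset.mem_filter, Finset.mem_range]
    refine ⟨hj'n, ?_⟩
    rw [aux_take_eq_iff hj'n]
    intro i hi
    exact (aux_take_eq_iff hkn w w').mp hkeq i (by omega)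
  rw [prefCount, aux_init_seg hA hdc j, Finset.mem_filter, Finset.mem_range]
  constructor
  · intro h; exact (aux_take_eq_iff hj w w').mp h.2
  · intro h; exact ⟨hj, (aux_take_eq_iff hj w w').mpr h⟩

lemma aux_sum_G {n d : ℕ} (c : (Fin n → Fin d) × (Fin n → Fin d) → ℕ)
    (hcle : ∀ p, c p ≤ n)
    (hclt : ∀ p : (Fin n → Fin d) × (Fin n → Fin d), ∀ j, j < n →
      (j < c p ↔ ∀ i : Fin n, (i : ℕ) < j + 1 → p.1 i = p.2 i))
    (G : ℕ → ℝ) :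
    ∑ p : (Fin n → Fin d) × (Fin n → Fin d), G (c p)
      = (d : ℝ) ^ n * ((d : ℝ) ^ n * G 0
        + ∑ j ∈ Finset.range n, (G (j + 1) - G j) * (d : ℝ) ^ (n - 1 - j)) := by
  classical
  rw [Fintype.sum_prod_type]
  have hcard : (Finset.univ : Finset (Fin n → Fin d)).card = d ^ n := by
    simp [Fintype.card_fun]
  have hinner : ∀ w : Fin n → Fin d,
      ∑ w' : Fin n → Fin d, G (c (w, w'))
        = (d : ℝ) ^ n * G 0
          + ∑ j ∈ Finset.range n, (G (j + 1) - G j) * (d : ℝ) ^ (n - 1 - j) := by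
    intro w
    have hper : ∀ w' : Fin n → Fin d, G (c (w, w')) = G 0
        + ∑ j ∈ Finset.range n,
          (if (∀ i : Fin n, (i : ℕ) < j + 1 → w i = w' i) then G (j + 1) - G j else 0) := by
      intro w'
      have h1 : ∀ j ∈ Finset.range n,
          (if (∀ i : Fin n, (i : ℕ) < j + 1 → w i = w' i) then G (j + 1) - G j else 0)
            = (if j < c (w, w') then G (j + 1) - G j else 0) := by
        intro j hj
        rw [Finset.mem_range] at hj
        exact if_congr (Iff.symm (hclt (w, w') j hj)) rfl rfl
      rw [Finset.sum_congr rfl h1, ← Finset.sum_filter]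
      have h2 : (Finset.range n).filter (fun j => j < c (w, w')) = Finset.range (c (w, w')) := by
        ext j
        simp only [Finset.mem_filter, Finset.mem_range]
        constructor
        · exact fun h => h.2
        · intro h; exact ⟨lt_of_lt_of_le h (hcle _), h⟩
      rw [h2, Finset.sum_range_sub]
      ring
    rw [Finset.sum_congr rfl (fun w' _ => hper w'), Finset.sum_add_distrib,
      Finset.sum_const, hcard]
    congr 1
    · rw [nsmul_eq_mul]; push_cast; ring
    rw [Finset.sum_comm]
    apply Finset.sum_congr rfl
    intro j hj
    rw [Finset.mem_range] at hj
    rw [← Finset.sum_filter]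
    have hfeq : Finset.univ.filter
        (fun w' : Fin n → Fin d => ∀ i : Fin n, (i : ℕ) < j + 1 → w i = w' i)
        = Finset.univ.filter
        (fun w' : Fin n → Fin d => ∀ i : Fin n, (i : ℕ) < j + 1 → w' i = w i) := by
      apply Finset.filter_congr
      intro w' _
      constructor <;> (intro h i hi; exact (h i hi).symm)
    rw [hfeq, Finset.sum_const, aux_count (j + 1) (by omega) w, nsmul_eq_mul]
    have : n - (j + 1) = n - 1 - j := by omega
    rw [this]
    push_cast
    ring
  rw [Finset.sum_congr rfl (fun w _ => hinner w), Finset.sum_const, hcard, nsmul_eq_mul]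
  push_cast
  ring

end AuxDefs


section M2

variable {d n : ℕ}

lemma aux_len (w : Fin n → Fin d) {k : ℕ} (hk : k < n) :
    ((List.ofFn w).take (k + 1)).length = k + 1 := by
  simp [List.length_take]; omega

lemma aux_injOn (w : Fin n → Fin d) :
    Set.InjOn (fun k => (some ((List.ofFn w).take (k + 1)) : Option (List (Fin d))))
      ↑(Finset.range n) := by
  intro k hk j hj h
  simp only [Finset.coe_range, Set.mem_Iio] at hk hj
  simp only [Option.some.injEq] at h
  have := congrArg List.length h
  rw [aux_len w hk, aux_len w hj] at this
  omega

lemma aux_good (w : Fin n → Fin d) :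
    ∀ x ∈ (Finset.range n).image
      (fun k => (some ((List.ofFn w).take (k + 1)) : Option (List (Fin d)))),
      x ≠ none ∧ x ≠ some ([] : List (Fin d)) := by
  intro x hx
  rw [Finset.mem_image] at hx
  obtain ⟨k, hk, rfl⟩ := hx
  rw [Finset.mem_range] at hk
  refine ⟨by simp, ?_⟩
  intro h
  rw [Option.some.injEq] at h
  have := congrArg List.length h
  rw [aux_len w hk] at this
  simp at this

lemma aux_card_Pw (w : Fin n → Fin d) :
    ((Finset.range n).image
      (fun k => (some ((List.ofFn w).take (k + 1)) : Option (List (Fin d))))).card = n := by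
  rw [Finset.card_image_of_injOn (aux_injOn w), Finset.card_range]

lemma aux_inter_card (w w' : Fin n → Fin d) :
    (((Finset.range n).image
        (fun k => (some ((List.ofFn w).take (k + 1)) : Option (List (Fin d))))) ∩
      ((Finset.range n).image
        (fun k => (some ((List.ofFn w').take (k + 1)) : Option (List (Fin d)))))).card
      = prefCount w w' := by
  classical
  have hset : (((Finset.range n).image
        (fun k => (some ((List.ofFn w).take (k + 1)) : Option (List (Fin d))))) ∩
      ((Finset.range n).image
        (fun k => (some ((List.ofFn w').take (k + 1)) : Option (List (Fin d))))))
      = ((Finset.range n).filter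
          (fun k => (List.ofFn w).take (k + 1) = (List.ofFn w').take (k + 1))).image
        (fun k => (some ((List.ofFn w).take (k + 1)) : Option (List (Fin d)))) := by
    ext x
    simp only [Finset.mem_inter, Finset.mem_image, Finset.mem_filter, Finset.mem_range]
    constructor
    · rintro ⟨⟨k, hk, rfl⟩, ⟨k', hk', heq⟩⟩
      rw [Option.some.injEq] at heq
      have hlen := congrArg List.length heq
      rw [aux_len w' hk', aux_len w hk] at hlen
      have hkk : k' = k := by omega
      have heq2 : (List.ofFn w).take (k + 1) = (List.ofFn w').take (k + 1) := by
        rw [hkk] at heq; exact heq.symm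
      exact ⟨k, ⟨hk, heq2⟩, rfl⟩
    · rintro ⟨k, ⟨hk, heq⟩, rfl⟩
      exact ⟨⟨k, hk, rfl⟩, ⟨k, hk, by rw [heq]⟩⟩
  rw [hset, Finset.card_image_of_injOn ((aux_injOn w).mono (by
    intro k hk
    simp only [Finset.coe_filter, Set.mem_setOf_eq] at hk
    simp only [Finset.coe_range, Set.mem_Iio]
    exact Finset.mem_range.mp hk.1))]
  rfl

end M2


lemma aux_exp_sum_integral {Ω : Type*} [MeasurableSpace Ω] (P : Measure Ω)
    [IsProbabilityMeasure P] {d : ℕ}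
    (W : Option (List (Fin d)) → Ω → ℝ) (V0 : Ω → ℝ)
    (hmeas : ∀ o, Measurable (W o)) (hmeas0 : Measurable V0)
    (hindep : iIndepFun W P)
    (hident : ∀ x : List (Fin d), x ≠ [] → Measure.map (W (some x)) P = Measure.map V0 P)
    (hidentstar : Measure.map (W none) P = Measure.map V0 P)
    (hint : ∀ β : ℝ, Integrable (fun ω => Real.exp (β * V0 ω)) P)
    (F : Option (List (Fin d)) → ℝ)
    (s : Finset (Option (List (Fin d)))) (hs : ∀ x ∈ s, x ≠ some ([] : List (Fin d))) :
    Integrable (fun ω => ∏ x ∈ s, Real.exp (F x * W x ω)) P ∧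
      ∫ ω, ∏ x ∈ s, Real.exp (F x * W x ω) ∂P
        = ∏ x ∈ s, ∫ ω, Real.exp (F x * V0 ω) ∂P := by
  classical
  have hmap : ∀ o : Option (List (Fin d)), o ≠ some ([] : List (Fin d)) →
      Measure.map (W o) P = Measure.map V0 P := by
    intro o ho
    match o with
    | none => exact hidentstar
    | some l => exact hident l (fun h => ho (by rw [h]))
  have hmexp : ∀ c : ℝ, Measurable (fun t : ℝ => Real.exp (c * t)) := fun c =>
    Real.measurable_exp.comp (measurable_const.mul measurable_id)
  have hsingle : ∀ o : Option (List (Fin d)), o ≠ some ([] : List (Fin d)) → ∀ c : ℝ,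
      Integrable (fun ω => Real.exp (c * W o ω)) P ∧
        ∫ ω, Real.exp (c * W o ω) ∂P = ∫ ω, Real.exp (c * V0 ω) ∂P := by
    intro o ho c
    have h1 : Integrable (fun t : ℝ => Real.exp (c * t)) (Measure.map V0 P) := by
      rw [integrable_map_measure (hmexp c).aestronglyMeasurable hmeas0.aemeasurable]
      exact hint c
    have h2 : Integrable (fun t : ℝ => Real.exp (c * t)) (Measure.map (W o) P) := by
      rw [hmap o ho]; exact h1
    constructor
    · exact (integrable_map_measure (hmexp c).aestronglyMeasurable
        (hmeas o).aemeasurable).mp h2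
    · rw [← integral_map (hmeas o).aemeasurable (hmexp c).aestronglyMeasurable,
        hmap o ho,
        integral_map hmeas0.aemeasurable (hmexp c).aestronglyMeasurable]
  -- the family (exp (F x * W x ·)) is i.i.d.
  have hgindep : iIndepFun (fun x ω => Real.exp (F x * W x ω)) P :=
    hindep.comp (fun x t => Real.exp (F x * t)) (fun x => hmexp (F x))
  have hgmeas : ∀ x, Measurable (fun ω => Real.exp (F x * W x ω)) := fun x =>
    (hmexp (F x)).comp (hmeas x)
  induction s using Finset.induction_on with
  | empty => simp
  | @insert a s ha ih =>
    have hs' : ∀ x ∈ s, x ≠ some ([] : List (Fin d)) := fun x hx =>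
      hs x (Finset.mem_insert_of_mem hx)
    obtain ⟨ihInt, ihEq⟩ := ih hs'
    have hindepPair : IndepFun (fun ω => ∏ x ∈ s, Real.exp (F x * W x ω))
        (fun ω => Real.exp (F a * W a ω)) P := by
      have := hgindep.indepFun_finset_prod_of_notMem hgmeas ha
      have heq : (∏ x ∈ s, fun ω => Real.exp (F x * W x ω))
          = fun ω => ∏ x ∈ s, Real.exp (F x * W x ω) := by
        funext ω; simp [Finset.prod_apply]
      rwa [heq] at this
    obtain ⟨haInt, haEq⟩ := hsingle a (hs a (Finset.mem_insert_self a s)) (F a)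
    have hmul : Integrable (fun ω =>
        Real.exp (F a * W a ω) * ∏ x ∈ s, Real.exp (F x * W x ω)) P := by
      have := (hindepPair.symm).integrable_mul haInt ihInt
      simpa [Pi.mul_def] using this
    constructor
    · have : (fun ω => ∏ x ∈ insert a s, Real.exp (F x * W x ω))
          = fun ω => Real.exp (F a * W a ω) * ∏ x ∈ s, Real.exp (F x * W x ω) := by
        funext ω; rw [Finset.prod_insert ha]
      rw [this]; exact hmul
    · have hrw : ∀ ω, (∏ x ∈ insert a s, Real.exp (F x * W x ω))
          = Real.exp (F a * W a ω) * ∏ x ∈ s, Real.exp (F x * W x ω) := fun ω =>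
        Finset.prod_insert ha
      rw [Finset.prod_insert ha, ← ihEq, ← haEq]
      calc ∫ ω, ∏ x ∈ insert a s, Real.exp (F x * W x ω) ∂P
          = ∫ ω, Real.exp (F a * W a ω) * ∏ x ∈ s, Real.exp (F x * W x ω) ∂P := by
            exact integral_congr_ae (Filter.Eventually.of_forall hrw)
        _ = (∫ ω, Real.exp (F a * W a ω) ∂P) * ∫ ω, ∏ x ∈ s, Real.exp (F x * W x ω) ∂P := by
            exact (hindepPair.symm).integral_fun_mul_eq_mul_integral (hgmeas a).aestronglyMeasurable
              ((Finset.measurable_prod s (fun x _ => hgmeas x)).aestronglyMeasurable)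


lemma aux_EX {Ω : Type*} [MeasurableSpace Ω] (P : Measure Ω)
    [IsProbabilityMeasure P] {d : ℕ}
    (W : Option (List (Fin d)) → Ω → ℝ) (V0 : Ω → ℝ)
    (hmeas : ∀ o, Measurable (W o)) (hmeas0 : Measurable V0)
    (hindep : iIndepFun W P)
    (hident : ∀ x : List (Fin d), x ≠ [] → Measure.map (W (some x)) P = Measure.map V0 P)
    (hidentstar : Measure.map (W none) P = Measure.map V0 P)
    (hint : ∀ β : ℝ, Integrable (fun ω => Real.exp (β * V0 ω)) P)
    (β : ℝ) (n : ℕ) :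
    Integrable (fun ω => Real.exp (β * W none ω) *
      ∑ w : Fin n → Fin d, Real.exp (β * ∑ k ∈ Finset.range n,
        W (some ((List.ofFn w).take (k + 1))) ω)) P ∧
    ∫ ω, Real.exp (β * W none ω) *
      ∑ w : Fin n → Fin d, Real.exp (β * ∑ k ∈ Finset.range n,
        W (some ((List.ofFn w).take (k + 1))) ω) ∂P
      = (d : ℝ) ^ n * (∫ ω, Real.exp (β * V0 ω) ∂P) ^ (n + 1) := by
  classical
  set Pw : (Fin n → Fin d) → Finset (Option (List (Fin d))) := fun w =>
    (Finset.range n).image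
      (fun k => (some ((List.ofFn w).take (k + 1)) : Option (List (Fin d)))) with hPw
  have hnone : ∀ w, none ∉ Pw w := by
    intro w hw
    exact ((aux_good w) none hw).1 rfl
  have hgood : ∀ w, ∀ x ∈ insert none (Pw w), x ≠ some ([] : List (Fin d)) := by
    intro w x hx
    rcases Finset.mem_insert.mp hx with h | h
    · subst h; simp
    · exact ((aux_good w) x h).2
  -- pointwise identity per w
  have hpt : ∀ (w : Fin n → Fin d) (ω : Ω),
      Real.exp (β * W none ω) * Real.exp (β * ∑ k ∈ Finset.range n,
          W (some ((List.ofFn w).take (k + 1))) ω)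
        = Real.exp (∑ x ∈ insert none (Pw w), β * W x ω) := by
    intro w ω
    rw [← Real.exp_add, Finset.sum_insert (hnone w)]
    congr 1
    rw [Finset.mul_sum, hPw, Finset.sum_image]
    intro k hk j hj h
    have := aux_injOn w (by simpa using hk) (by simpa using hj) h
    exact this
  have hterm : ∀ w : Fin n → Fin d,
      Integrable (fun ω => Real.exp (∑ x ∈ insert none (Pw w), β * W x ω)) P ∧
      ∫ ω, Real.exp (∑ x ∈ insert none (Pw w), β * W x ω) ∂P
        = (∫ ω, Real.exp (β * V0 ω) ∂P) ^ (n + 1) := by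
    intro w
    obtain ⟨hI, hE⟩ := aux_exp_sum_integral P W V0 hmeas hmeas0 hindep hident hidentstar hint
      (fun _ => β) (insert none (Pw w)) (hgood w)
    have hprod : ∀ ω, Real.exp (∑ x ∈ insert none (Pw w), β * W x ω)
        = ∏ x ∈ insert none (Pw w), Real.exp (β * W x ω) := fun ω => Real.exp_sum _ _
    constructor
    · exact hI.congr (Filter.Eventually.of_forall (fun ω => (hprod ω).symm))
    · rw [integral_congr_ae (Filter.Eventually.of_forall hprod), hE, Finset.prod_const,
        Finset.card_insert_of_notMem (hnone w), aux_card_Pw w]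
  have hXeq : (fun ω => Real.exp (β * W none ω) *
      ∑ w : Fin n → Fin d, Real.exp (β * ∑ k ∈ Finset.range n,
        W (some ((List.ofFn w).take (k + 1))) ω))
      = fun ω => ∑ w : Fin n → Fin d, Real.exp (∑ x ∈ insert none (Pw w), β * W x ω) := by
    funext ω
    rw [Finset.mul_sum]
    exact Finset.sum_congr rfl (fun w _ => hpt w ω)
  rw [hXeq]
  constructor
  · exact integrable_finset_sum _ (fun w _ => (hterm w).1)
  · rw [integral_finset_sum _ (fun w _ => (hterm w).1)]
    rw [Finset.sum_congr rfl (fun w _ => (hterm w).2), Finset.sum_const]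
    have : (Finset.univ : Finset (Fin n → Fin d)).card = d ^ n := by simp [Fintype.card_fun]
    rw [this, nsmul_eq_mul]
    push_cast
    ring


lemma aux_EX2 {Ω : Type*} [MeasurableSpace Ω] (P : Measure Ω)
    [IsProbabilityMeasure P] {d : ℕ}
    (W : Option (List (Fin d)) → Ω → ℝ) (V0 : Ω → ℝ)
    (hmeas : ∀ o, Measurable (W o)) (hmeas0 : Measurable V0)
    (hindep : iIndepFun W P)
    (hident : ∀ x : List (Fin d), x ≠ [] → Measure.map (W (some x)) P = Measure.map V0 P)
    (hidentstar : Measure.map (W none) P = Measure.map V0 P)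
    (hint : ∀ β : ℝ, Integrable (fun ω => Real.exp (β * V0 ω)) P)
    (β : ℝ) (n : ℕ) :
    Integrable (fun ω => (Real.exp (β * W none ω) *
      ∑ w : Fin n → Fin d, Real.exp (β * ∑ k ∈ Finset.range n,
        W (some ((List.ofFn w).take (k + 1))) ω)) ^ 2) P ∧
    ∫ ω, (Real.exp (β * W none ω) *
      ∑ w : Fin n → Fin d, Real.exp (β * ∑ k ∈ Finset.range n,
        W (some ((List.ofFn w).take (k + 1))) ω)) ^ 2 ∂P
      = (∫ ω, Real.exp ((2 * β) * V0 ω) ∂P) *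
        ∑ p : (Fin n → Fin d) × (Fin n → Fin d),
          (∫ ω, Real.exp ((2 * β) * V0 ω) ∂P) ^ prefCount p.1 p.2 *
          (∫ ω, Real.exp (β * V0 ω) ∂P) ^ (2 * (n - prefCount p.1 p.2)) := by
  classical
  set m1 : ℝ := ∫ ω, Real.exp (β * V0 ω) ∂P with hm1
  set m2 : ℝ := ∫ ω, Real.exp ((2 * β) * V0 ω) ∂P with hm2
  set Pw : (Fin n → Fin d) → Finset (Option (List (Fin d))) := fun w =>
    (Finset.range n).image
      (fun k => (some ((List.ofFn w).take (k + 1)) : Option (List (Fin d)))) with hPw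
  set u : (Fin n → Fin d) × (Fin n → Fin d) → Finset (Option (List (Fin d))) := fun p =>
    Pw p.1 ∪ Pw p.2 with hu
  set F : ((Fin n → Fin d) × (Fin n → Fin d)) → Option (List (Fin d)) → ℝ := fun p o =>
    if o = none then 2 * β
    else β * ((if o ∈ Pw p.1 then (1 : ℝ) else 0) + (if o ∈ Pw p.2 then 1 else 0)) with hF
  have hnonePw : ∀ w, none ∉ Pw w := fun w hw => ((aux_good w) none hw).1 rfl
  have hnoneu : ∀ p, none ∉ u p := by
    intro p hp
    rcases Finset.mem_union.mp hp with h | h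
    · exact hnonePw _ h
    · exact hnonePw _ h
  have hgood : ∀ p, ∀ x ∈ insert none (u p), x ≠ some ([] : List (Fin d)) := by
    intro p x hx
    rcases Finset.mem_insert.mp hx with h | h
    · subst h; simp
    · rcases Finset.mem_union.mp h with h' | h'
      · exact ((aux_good _) x h').2
      · exact ((aux_good _) x h').2
  -- rewriting the path sum
  have hTw : ∀ (w : Fin n → Fin d) (ω : Ω),
      ∑ k ∈ Finset.range n, β * W (some ((List.ofFn w).take (k + 1))) ω
        = ∑ x ∈ Pw w, β * W x ω := by
    intro w ω
    rw [hPw, Finset.sum_image]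
    intro k hk j hj h
    exact aux_injOn w (by simpa using hk) (by simpa using hj) h
  -- pointwise identity per pair
  have hpt : ∀ (p : (Fin n → Fin d) × (Fin n → Fin d)) (ω : Ω),
      Real.exp (β * W none ω) ^ 2 *
        (Real.exp (∑ k ∈ Finset.range n, β * W (some ((List.ofFn p.1).take (k + 1))) ω) *
         Real.exp (∑ k ∈ Finset.range n, β * W (some ((List.ofFn p.2).take (k + 1))) ω))
        = Real.exp (∑ x ∈ insert none (u p), F p x * W x ω) := by
    intro p ω
    have hexp2 : ∀ a b c : ℝ, Real.exp a ^ 2 * (Real.exp b * Real.exp c)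
        = Real.exp (2 * a + (b + c)) := by
      intro a b c
      rw [sq, ← Real.exp_add a a, ← Real.exp_add b c, ← Real.exp_add]
      congr 1; ring
    rw [hexp2]
    congr 1
    rw [Finset.sum_insert (hnoneu p)]
    have hFnone : F p none = 2 * β := by simp [hF]
    have hsplit : ∀ x ∈ u p, F p x * W x ω
        = (if x ∈ Pw p.1 then β * W x ω else 0) + (if x ∈ Pw p.2 then β * W x ω else 0) := by
      intro x hx
      have hxn : x ≠ none := fun h => hnoneu p (h ▸ hx)
      rw [hF]
      simp only [if_neg hxn]
      by_cases h1 : x ∈ Pw p.1 <;> by_cases h2 : x ∈ Pw p.2 <;> simp [h1, h2] <;> ring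
    rw [Finset.sum_congr rfl hsplit, Finset.sum_add_distrib,
      Finset.sum_ite_mem, Finset.sum_ite_mem,
      Finset.inter_eq_right.mpr (Finset.subset_union_left),
      Finset.inter_eq_right.mpr (Finset.subset_union_right),
      hTw p.1 ω, hTw p.2 ω, hFnone]
    ring
  -- integral of each pair term
  have hterm : ∀ p : (Fin n → Fin d) × (Fin n → Fin d),
      Integrable (fun ω => Real.exp (∑ x ∈ insert none (u p), F p x * W x ω)) P ∧
      ∫ ω, Real.exp (∑ x ∈ insert none (u p), F p x * W x ω) ∂P
        = m2 * (m2 ^ prefCount p.1 p.2 * m1 ^ (2 * (n - prefCount p.1 p.2))) := by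
    intro p
    obtain ⟨hI, hE⟩ := aux_exp_sum_integral P W V0 hmeas hmeas0 hindep hident hidentstar hint
      (F p) (insert none (u p)) (hgood p)
    have hprod : ∀ ω, Real.exp (∑ x ∈ insert none (u p), F p x * W x ω)
        = ∏ x ∈ insert none (u p), Real.exp (F p x * W x ω) := fun ω => Real.exp_sum _ _
    refine ⟨hI.congr (Filter.Eventually.of_forall (fun ω => (hprod ω).symm)), ?_⟩
    rw [integral_congr_ae (Filter.Eventually.of_forall hprod), hE,
      Finset.prod_insert (hnoneu p)]
    have hFnone : F p none = 2 * β := by simp [hF]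
    rw [hFnone]
    congr 1
    -- evaluate the product over u p
    set I : Finset (Option (List (Fin d))) := Pw p.1 ∩ Pw p.2 with hIdef
    have hIsub : I ⊆ u p := by
      intro x hx
      exact Finset.mem_union_left _ (Finset.mem_inter.mp hx).1
    rw [← Finset.prod_sdiff hIsub]
    have hImem : ∀ x ∈ I, (∫ ω, Real.exp (F p x * V0 ω) ∂P) = m2 := by
      intro x hx
      obtain ⟨h1, h2⟩ := Finset.mem_inter.mp hx
      have hxn : x ≠ none := fun h => hnonePw p.1 (h ▸ h1)
      have : F p x = 2 * β := by
        rw [hF]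
        simp only [if_neg hxn, if_pos h1, if_pos h2]
        ring
      rw [this]
    have hDmem : ∀ x ∈ u p \ I, (∫ ω, Real.exp (F p x * V0 ω) ∂P) = m1 := by
      intro x hx
      obtain ⟨hxu, hxI⟩ := Finset.mem_sdiff.mp hx
      have hxn : x ≠ none := fun h => hnoneu p (h ▸ hxu)
      have hFx : F p x = β := by
        rw [hF]
        simp only [if_neg hxn]
        by_cases h1 : x ∈ Pw p.1 <;> by_cases h2 : x ∈ Pw p.2
        · exact absurd (Finset.mem_inter.mpr ⟨h1, h2⟩) hxI
        · simp [h1, h2]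
        · simp [h1, h2]
        · rcases Finset.mem_union.mp hxu with h | h
          · exact absurd h h1
          · exact absurd h h2
      rw [hFx]
    rw [Finset.prod_congr rfl hImem, Finset.prod_congr rfl hDmem,
      Finset.prod_const, Finset.prod_const]
    have hIcard : I.card = prefCount p.1 p.2 := aux_inter_card p.1 p.2
    have hucard : (u p).card + I.card = n + n := by
      have := Finset.card_union_add_card_inter (Pw p.1) (Pw p.2)
      rw [aux_card_Pw, aux_card_Pw] at this
      exact this
    have hDcard : (u p \ I).card = 2 * (n - prefCount p.1 p.2) := by
      rw [Finset.card_sdiff_of_subset hIsub]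
      have hle := prefCount_le p.1 p.2
      omega
    rw [hIcard, hDcard]
    ring
  -- pointwise identity for the square
  have hXsq : (fun ω => (Real.exp (β * W none ω) *
      ∑ w : Fin n → Fin d, Real.exp (β * ∑ k ∈ Finset.range n,
        W (some ((List.ofFn w).take (k + 1))) ω)) ^ 2)
      = fun ω => ∑ p : (Fin n → Fin d) × (Fin n → Fin d),
          Real.exp (∑ x ∈ insert none (u p), F p x * W x ω) := by
    funext ω
    simp only [pow_two]
    rw [mul_mul_mul_comm, Finset.sum_mul_sum]
    simp only [Finset.mul_sum]
    rw [Fintype.sum_prod_type]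
    exact Finset.sum_congr rfl (fun w _ => Finset.sum_congr rfl (fun w' _ => by
      rw [← pow_two]; exact hpt (w, w') ω))
  rw [hXsq]
  constructor
  · exact integrable_finset_sum _ (fun p _ => (hterm p).1)
  · rw [integral_finset_sum _ (fun p _ => (hterm p).1),
      Finset.sum_congr rfl (fun p _ => (hterm p).2), ← Finset.mul_sum]


lemma aux_var {Ω : Type*} [MeasurableSpace Ω] (P : Measure Ω)
    [IsProbabilityMeasure P] {d : ℕ}
    (W : Option (List (Fin d)) → Ω → ℝ) (V0 : Ω → ℝ)
    (hmeas : ∀ o, Measurable (W o)) (hmeas0 : Measurable V0)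
    (hindep : iIndepFun W P)
    (hident : ∀ x : List (Fin d), x ≠ [] → Measure.map (W (some x)) P = Measure.map V0 P)
    (hidentstar : Measure.map (W none) P = Measure.map V0 P)
    (hint : ∀ β : ℝ, Integrable (fun ω => Real.exp (β * V0 ω)) P)
    (β : ℝ) (n : ℕ) :
    variance (fun ω => Real.exp (β * W none ω) *
      ∑ w : Fin n → Fin d, Real.exp (β * ∑ k ∈ Finset.range n,
        W (some ((List.ofFn w).take (k + 1))) ω)) P
      = ((∫ ω, Real.exp ((2 * β) * V0 ω) ∂P) - (∫ ω, Real.exp (β * V0 ω) ∂P) ^ 2) *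
        (((d : ℝ) ^ 2 * (∫ ω, Real.exp (β * V0 ω) ∂P) ^ 2) ^ n
          + ∑ j ∈ Finset.range n,
            ((d : ℝ) * ∫ ω, Real.exp ((2 * β) * V0 ω) ∂P) ^ (j + 1) *
            ((d : ℝ) ^ 2 * (∫ ω, Real.exp (β * V0 ω) ∂P) ^ 2) ^ (n - 1 - j)) := by
  classical
  set m1 : ℝ := ∫ ω, Real.exp (β * V0 ω) ∂P with hm1
  set m2 : ℝ := ∫ ω, Real.exp ((2 * β) * V0 ω) ∂P with hm2
  set X : Ω → ℝ := fun ω => Real.exp (β * W none ω) *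
      ∑ w : Fin n → Fin d, Real.exp (β * ∑ k ∈ Finset.range n,
        W (some ((List.ofFn w).take (k + 1))) ω) with hX
  have hXmeas : Measurable X := by
    apply Measurable.mul
    · exact Real.measurable_exp.comp (measurable_const.mul (hmeas none))
    · exact Finset.measurable_sum Finset.univ (fun w _ =>
        Real.measurable_exp.comp (measurable_const.mul
          (Finset.measurable_sum _ (fun k _ => hmeas _))))
  obtain ⟨hIsq, hEsq⟩ := aux_EX2 P W V0 hmeas hmeas0 hindep hident hidentstar hint β n
  obtain ⟨hI1, hE1⟩ := aux_EX P W V0 hmeas hmeas0 hindep hident hidentstar hint β n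
  have hmem : MemLp X 2 P := by
    rw [memLp_two_iff_integrable_sq hXmeas.aestronglyMeasurable]
    exact hIsq
  rw [variance_eq_sub hmem]
  simp only [Pi.pow_apply]
  rw [hX] at *
  rw [hEsq, hE1]
  -- now pure algebra
  set G : ℕ → ℝ := fun j => m2 ^ j * m1 ^ (2 * (n - j)) with hG
  have hsum : ∑ p : (Fin n → Fin d) × (Fin n → Fin d),
      m2 ^ prefCount p.1 p.2 * m1 ^ (2 * (n - prefCount p.1 p.2))
      = (d : ℝ) ^ n * ((d : ℝ) ^ n * G 0
        + ∑ j ∈ Finset.range n, (G (j + 1) - G j) * (d : ℝ) ^ (n - 1 - j)) := by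
    exact aux_sum_G (fun p => prefCount p.1 p.2) (fun p => prefCount_le p.1 p.2)
      (fun p j hj => prefCount_lt_iff p.1 p.2 hj) G
  rw [hsum]
  have hS : m2 * ((d : ℝ) ^ n *
      (∑ j ∈ Finset.range n, (G (j + 1) - G j) * (d : ℝ) ^ (n - 1 - j)))
      = ∑ j ∈ Finset.range n,
        (m2 - m1 ^ 2) * (((d : ℝ) * m2) ^ (j + 1) * ((d : ℝ) ^ 2 * m1 ^ 2) ^ (n - 1 - j)) := by
    rw [Finset.mul_sum, Finset.mul_sum]
    apply Finset.sum_congr rfl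
    intro j hj
    rw [Finset.mem_range] at hj
    have h1 : n - (j + 1) = n - 1 - j := by omega
    have h2 : n - j = (n - 1 - j) + 1 := by omega
    have h3 : (d : ℝ) ^ n = (d : ℝ) ^ (j + 1) * (d : ℝ) ^ (n - 1 - j) := by
      rw [← pow_add]; congr 1; omega
    rw [hG]
    simp only []
    rw [h1, h2, h3]
    ring
  have hG0 : G 0 = m1 ^ (2 * n) := by rw [hG]; simp
  calc m2 * ((d : ℝ) ^ n * ((d : ℝ) ^ n * G 0
        + ∑ j ∈ Finset.range n, (G (j + 1) - G j) * (d : ℝ) ^ (n - 1 - j)))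
        - ((d : ℝ) ^ n * m1 ^ (n + 1)) ^ 2
      = (m2 * ((d : ℝ) ^ n * ((d : ℝ) ^ n * G 0)) - ((d : ℝ) ^ n * m1 ^ (n + 1)) ^ 2)
        + m2 * ((d : ℝ) ^ n *
          (∑ j ∈ Finset.range n, (G (j + 1) - G j) * (d : ℝ) ^ (n - 1 - j))) := by ring
    _ = (m2 - m1 ^ 2) * (((d : ℝ) ^ 2 * m1 ^ 2) ^ n)
        + ∑ j ∈ Finset.range n,
          (m2 - m1 ^ 2) * (((d : ℝ) * m2) ^ (j + 1) * ((d : ℝ) ^ 2 * m1 ^ 2) ^ (n - 1 - j)) := by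
        rw [hS, hG0]; congr 1; ring
    _ = (m2 - m1 ^ 2) * (((d : ℝ) ^ 2 * m1 ^ 2) ^ n
        + ∑ j ∈ Finset.range n,
          ((d : ℝ) * m2) ^ (j + 1) * ((d : ℝ) ^ 2 * m1 ^ 2) ^ (n - 1 - j)) := by
        rw [← Finset.mul_sum]; ring


/-- **Lemma 2.6(a)** (exponential growth rate of the variance of the weighted
homogeneous partition function).  `W (some x)` is the bulk disorder at the node `x`
and `W none = V*` is an extra independent copy of the disorder; all these variables
are i.i.d. with distribution `V`.  For every `β > 0`,
`lim (Var(e^{βV*}·Z_n^{HD}(β)))^{1/n}` exists and equals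
`max {d²·e^{2λ(β)}, d·e^{λ(2β)}}`. -/
theorem variance_growth_rate
    {Ω : Type*} [MeasurableSpace Ω] (P : Measure Ω) [IsProbabilityMeasure P]
    (d : ℕ) (hd : 2 ≤ d)
    -- the i.i.d. family: bulk disorder at `some x`, and the extra copy `V*` at `none`
    (W : Option (List (Fin d)) → Ω → ℝ) (V0 : Ω → ℝ)
    (hmeas : ∀ o, Measurable (W o)) (hmeas0 : Measurable V0)
    (hindep : iIndepFun W P)
    (hident : ∀ x : List (Fin d), x ≠ [] → Measure.map (W (some x)) P = Measure.map V0 P)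
    (hidentstar : Measure.map (W none) P = Measure.map V0 P)
    (hnconst : ¬ ∃ c : ℝ, ∀ᵐ ω ∂P, V0 ω = c)
    -- the cumulant generating function `λ`, finite everywhere
    (lam : ℝ → ℝ)
    (hint : ∀ β : ℝ, Integrable (fun ω => Real.exp (β * V0 ω)) P)
    (hlam : ∀ β : ℝ, lam β = Real.log (∫ ω, Real.exp (β * V0 ω) ∂P))
    -- the homogeneous-disorder partition function
    (Z : ℕ → ℝ → Ω → ℝ)
    (hZ : ∀ (n : ℕ) (β : ℝ) (ω : Ω), Z n β ω =
      ∑ w : Fin n → Fin d, Real.exp (β * ∑ k ∈ Finset.range n,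
        W (some ((List.ofFn w).take (k + 1))) ω))
    (β : ℝ) (hβ : 0 < β) :
    Filter.Tendsto
      (fun n : ℕ =>
        (variance (fun ω => Real.exp (β * W none ω) * Z n β ω) P) ^ (1 / (n : ℝ)))
      Filter.atTop
      (nhds (max ((d : ℝ) ^ 2 * Real.exp (2 * lam β)) ((d : ℝ) * Real.exp (lam (2 * β))))) := by
  classical
  set m1 : ℝ := ∫ ω, Real.exp (β * V0 ω) ∂P with hm1def
  set m2 : ℝ := ∫ ω, Real.exp ((2 * β) * V0 ω) ∂P with hm2def
  -- positivity of the exponential moments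
  have hpos : ∀ c : ℝ, 0 < ∫ ω, Real.exp (c * V0 ω) ∂P := by
    intro c
    rw [integral_pos_iff_support_of_nonneg (fun ω => (Real.exp_pos _).le) (hint c)]
    have hsupp : Function.support (fun ω => Real.exp (c * V0 ω)) = Set.univ := by
      ext ω; simp [Function.mem_support, (Real.exp_pos _).ne']
    rw [hsupp]
    simp
  have hm1pos : 0 < m1 := hpos β
  have hm2pos : 0 < m2 := hpos (2 * β)
  -- strict Cauchy-Schwarz: m1 ^ 2 < m2, from non-constancy of V0
  have he2 : ∀ ω, Real.exp (β * V0 ω) * Real.exp (β * V0 ω)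
      = Real.exp ((2 * β) * V0 ω) := by
    intro ω; rw [← Real.exp_add]; congr 1; ring
  have hKpos : 0 < m2 - m1 ^ 2 := by
    set g : Ω → ℝ := fun ω => (Real.exp (β * V0 ω) - m1) ^ 2 with hgdef
    have hgeq : g = fun ω =>
        Real.exp ((2 * β) * V0 ω) - (2 * m1) * Real.exp (β * V0 ω) + m1 ^ 2 :=
      funext fun ω => by linear_combination he2 ω
    have hgint1 : Integrable (fun ω =>
        Real.exp ((2 * β) * V0 ω) - (2 * m1) * Real.exp (β * V0 ω)) P :=
      (hint (2 * β)).sub ((hint β).const_mul (2 * m1))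
    have hgint : Integrable g P := by
      rw [hgeq]; exact hgint1.add (integrable_const _)
    have hgval : ∫ ω, g ω ∂P = m2 - m1 ^ 2 := by
      rw [hgeq]
      rw [integral_add hgint1 (integrable_const _),
        integral_sub (hint (2 * β)) ((hint β).const_mul (2 * m1)),
        integral_const_mul, integral_const]
      rw [← hm1def, ← hm2def]
      simp [measure_univ]
      ring
    have hKnn : 0 ≤ m2 - m1 ^ 2 := by
      rw [← hgval]; exact integral_nonneg (fun ω => sq_nonneg _)
    rcases lt_or_eq_of_le hKnn with h | h
    · exact h
    · exfalso
      have h0 : ∫ ω, g ω ∂P = 0 := by rw [hgval, ← h]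
      have hae := (integral_eq_zero_iff_of_nonneg
        (fun ω => sq_nonneg (Real.exp (β * V0 ω) - m1)) hgint).mp h0
      refine hnconst ⟨Real.log m1 / β, ?_⟩
      filter_upwards [hae] with ω hω
      have hg0 : (Real.exp (β * V0 ω) - m1) ^ 2 = 0 := hω
      have hsub : Real.exp (β * V0 ω) - m1 = 0 := by
        exact sq_eq_zero_iff.mp hg0
      have hexp : Real.exp (β * V0 ω) = m1 := by linarith
      have hlog : β * V0 ω = Real.log m1 := by rw [← hexp, Real.log_exp]
      field_simp
      linarith
  set K : ℝ := m2 - m1 ^ 2 with hKdef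
  set a : ℝ := (d : ℝ) ^ 2 * m1 ^ 2 with hadef
  set b : ℝ := (d : ℝ) * m2 with hbdef
  set T : ℕ → ℝ := fun n => a ^ n + ∑ j ∈ Finset.range n, b ^ (j + 1) * a ^ (n - 1 - j)
    with hTdef
  have hdpos : (0 : ℝ) < (d : ℝ) := by
    have : (2 : ℝ) ≤ (d : ℝ) := by exact_mod_cast hd
    linarith
  have hapos : 0 < a := by rw [hadef]; positivity
  have hbpos : 0 < b := by rw [hbdef]; positivity
  set M : ℝ := max a b with hMdef
  have hMpos : 0 < M := lt_max_of_lt_left hapos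
  -- the variance formula
  have hVar : ∀ n : ℕ, variance (fun ω => Real.exp (β * W none ω) * Z n β ω) P = K * T n := by
    intro n
    have hfun : (fun ω => Real.exp (β * W none ω) * Z n β ω)
        = (fun ω => Real.exp (β * W none ω) *
            ∑ w : Fin n → Fin d, Real.exp (β * ∑ k ∈ Finset.range n,
              W (some ((List.ofFn w).take (k + 1))) ω)) := by
      funext ω; rw [hZ n β ω]
    rw [hfun, aux_var P W V0 hmeas hmeas0 hindep hident hidentstar hint β n]
  -- bounds on T
  have hTlow : ∀ n : ℕ, 1 ≤ n → M ^ n ≤ T n := by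
    intro n hn
    have hsum_nonneg : (0 : ℝ) ≤ ∑ j ∈ Finset.range n, b ^ (j + 1) * a ^ (n - 1 - j) :=
      Finset.sum_nonneg (fun j _ => by positivity)
    rcases le_total a b with h | h
    · rw [hMdef, max_eq_right h]
      have hmem : n - 1 ∈ Finset.range n := Finset.mem_range.mpr (by omega)
      have hsingle := Finset.single_le_sum
        (f := fun j => b ^ (j + 1) * a ^ (n - 1 - j)) (fun j _ => by positivity) hmem
      have hterm : b ^ ((n - 1) + 1) * a ^ (n - 1 - (n - 1)) = b ^ n := by
        have h1 : n - 1 - (n - 1) = 0 := by omega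
        have h2 : (n - 1) + 1 = n := by omega
        rw [h1, h2, pow_zero, mul_one]
      rw [hTdef]
      simp only []
      have hapow : (0 : ℝ) ≤ a ^ n := by positivity
      have hsingle' : b ^ ((n - 1) + 1) * a ^ (n - 1 - (n - 1))
          ≤ ∑ j ∈ Finset.range n, b ^ (j + 1) * a ^ (n - 1 - j) := hsingle
      rw [hterm] at hsingle'
      linarith
    · rw [hMdef, max_eq_left h, hTdef]
      simp only []
      linarith
  have hThigh : ∀ n : ℕ, T n ≤ ((n : ℝ) + 1) * M ^ n := by
    intro n
    have h1 : a ^ n ≤ M ^ n := pow_le_pow_left₀ hapos.le (le_max_left a b) n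
    have h2 : ∀ j ∈ Finset.range n, b ^ (j + 1) * a ^ (n - 1 - j) ≤ M ^ n := by
      intro j hj
      rw [Finset.mem_range] at hj
      have hMn : M ^ n = M ^ (j + 1) * M ^ (n - 1 - j) := by
        rw [← pow_add]; congr 1; omega
      rw [hMn]
      exact mul_le_mul (pow_le_pow_left₀ hbpos.le (le_max_right a b) _)
        (pow_le_pow_left₀ hapos.le (le_max_left a b) _) (by positivity) (by positivity)
    have h3 : ∑ j ∈ Finset.range n, b ^ (j + 1) * a ^ (n - 1 - j)
        ≤ (n : ℝ) * M ^ n := by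
      have := Finset.sum_le_card_nsmul (Finset.range n) _ (M ^ n) h2
      rw [Finset.card_range, nsmul_eq_mul] at this
      exact this
    rw [hTdef]
    simp only []
    linarith
  -- rpow computations
  have hMne : ∀ n : ℕ, 1 ≤ n → ((M ^ n : ℝ)) ^ (1 / (n : ℝ)) = M := by
    intro n hn
    have hn0 : (n : ℝ) ≠ 0 := Nat.cast_ne_zero.mpr (by omega)
    rw [← Real.rpow_natCast M n, ← Real.rpow_mul hMpos.le, mul_one_div, div_self hn0,
      Real.rpow_one]
  -- squeeze
  have hLle : ∀ᶠ n : ℕ in atTop,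
      K ^ (1 / (n : ℝ)) * M ≤ (K * T n) ^ (1 / (n : ℝ)) := by
    filter_upwards [eventually_ge_atTop 1] with n hn
    have hle : K * M ^ n ≤ K * T n := mul_le_mul_of_nonneg_left (hTlow n hn) hKpos.le
    have heq : (K * M ^ n) ^ (1 / (n : ℝ)) = K ^ (1 / (n : ℝ)) * M := by
      rw [Real.mul_rpow hKpos.le (by positivity), hMne n hn]
    rw [← heq]
    exact Real.rpow_le_rpow (by positivity) hle (by positivity)
  have hUle : ∀ᶠ n : ℕ in atTop,
      (K * T n) ^ (1 / (n : ℝ)) ≤ (K * ((n : ℝ) + 1)) ^ (1 / (n : ℝ)) * M := by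
    filter_upwards [eventually_ge_atTop 1] with n hn
    have hle : K * T n ≤ (K * ((n : ℝ) + 1)) * M ^ n := by
      have := mul_le_mul_of_nonneg_left (hThigh n) hKpos.le
      calc K * T n ≤ K * (((n : ℝ) + 1) * M ^ n) := this
        _ = (K * ((n : ℝ) + 1)) * M ^ n := by ring
    have heq : ((K * ((n : ℝ) + 1)) * M ^ n) ^ (1 / (n : ℝ))
        = (K * ((n : ℝ) + 1)) ^ (1 / (n : ℝ)) * M := by
      rw [Real.mul_rpow (by positivity) (by positivity), hMne n hn]
    rw [← heq]
    have hTnn : 0 ≤ K * T n := by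
      have h0 : (0:ℝ) < M ^ n := by positivity
      nlinarith [hTlow n hn, hKpos]
    exact Real.rpow_le_rpow hTnn hle (by positivity)
  -- limits of the bounding sequences
  have hone : Tendsto (fun n : ℕ => 1 / (n : ℝ)) atTop (nhds 0) :=
    tendsto_one_div_atTop_nhds_zero_nat
  have hL : Tendsto (fun n : ℕ => K ^ (1 / (n : ℝ)) * M) atTop (nhds M) := by
    have h1 : Tendsto (fun n : ℕ => Real.log K * (1 / (n : ℝ))) atTop (nhds 0) := by
      simpa using hone.const_mul (Real.log K)
    have h2 : Tendsto (fun n : ℕ => Real.exp (Real.log K * (1 / (n : ℝ)))) atTop (nhds 1) := by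
      have := (Real.continuous_exp.tendsto 0).comp h1
      simpa [Real.exp_zero, Function.comp_def] using this
    have h3 : Tendsto (fun n : ℕ => K ^ (1 / (n : ℝ))) atTop (nhds 1) := by
      apply h2.congr
      intro n
      rw [Real.rpow_def_of_pos hKpos]
    simpa using h3.mul_const M
  have hU : Tendsto (fun n : ℕ => (K * ((n : ℝ) + 1)) ^ (1 / (n : ℝ)) * M) atTop (nhds M) := by
    have hlog1 : Tendsto (fun n : ℕ => Real.log K * (1 / (n : ℝ))) atTop (nhds 0) := by
      simpa using hone.const_mul (Real.log K)
    have hA : Tendsto (fun n : ℕ => Real.log ((n : ℝ) + 1) / ((n : ℝ) + 1)) atTop (nhds 0) := by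
      have hdiv : Tendsto (fun x : ℝ => Real.log x / x) atTop (nhds 0) := by
        have := Real.isLittleO_log_id_atTop.tendsto_div_nhds_zero
        simpa using this
      have hcast : Tendsto (fun n : ℕ => (n : ℝ) + 1) atTop atTop :=
        tendsto_atTop_add_const_right atTop 1 tendsto_natCast_atTop_atTop
      exact hdiv.comp hcast
    have hB : Tendsto (fun n : ℕ => ((n : ℝ) + 1) * (1 / (n : ℝ))) atTop (nhds 1) := by
      have hBeq : ∀ᶠ n : ℕ in atTop, (1 : ℝ) + 1 / (n : ℝ) = ((n : ℝ) + 1) * (1 / (n : ℝ)) := by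
        filter_upwards [eventually_ge_atTop 1] with n hn
        have hn0 : (n : ℝ) ≠ 0 := Nat.cast_ne_zero.mpr (by omega)
        field_simp
      have : Tendsto (fun n : ℕ => (1 : ℝ) + 1 / (n : ℝ)) atTop (nhds 1) := by
        simpa using (tendsto_const_nhds (x := (1:ℝ)) (f := atTop)).add hone
      exact Tendsto.congr' hBeq this
    have hlog2 : Tendsto (fun n : ℕ =>
        (Real.log ((n : ℝ) + 1) / ((n : ℝ) + 1)) * (((n : ℝ) + 1) * (1 / (n : ℝ))))
        atTop (nhds 0) := by
      simpa using hA.mul hB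
    have hlogsum : Tendsto (fun n : ℕ =>
        Real.log K * (1 / (n : ℝ)) +
          (Real.log ((n : ℝ) + 1) / ((n : ℝ) + 1)) * (((n : ℝ) + 1) * (1 / (n : ℝ))))
        atTop (nhds 0) := by
      simpa using hlog1.add hlog2
    have hlogfull : Tendsto (fun n : ℕ =>
        Real.log (K * ((n : ℝ) + 1)) * (1 / (n : ℝ))) atTop (nhds 0) := by
      apply Tendsto.congr' _ hlogsum
      filter_upwards [eventually_ge_atTop 1] with n hn
      have hn0 : (n : ℝ) ≠ 0 := Nat.cast_ne_zero.mpr (by omega)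
      have hn1 : ((n : ℝ) + 1) ≠ 0 := by positivity
      rw [Real.log_mul hKpos.ne' hn1]
      field_simp
    have hexp : Tendsto (fun n : ℕ =>
        Real.exp (Real.log (K * ((n : ℝ) + 1)) * (1 / (n : ℝ)))) atTop (nhds 1) := by
      have := (Real.continuous_exp.tendsto 0).comp hlogfull
      simpa [Real.exp_zero, Function.comp_def] using this
    have h3 : Tendsto (fun n : ℕ => (K * ((n : ℝ) + 1)) ^ (1 / (n : ℝ))) atTop (nhds 1) := by
      apply hexp.congr
      intro n
      rw [Real.rpow_def_of_pos (by positivity)]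
    simpa using h3.mul_const M
  have hmain : Tendsto (fun n : ℕ => (K * T n) ^ (1 / (n : ℝ))) atTop (nhds M) :=
    tendsto_of_tendsto_of_tendsto_of_le_of_le' hL hU hLle hUle
  -- identify the limit
  have hexp1 : Real.exp (2 * lam β) = m1 ^ 2 := by
    rw [hlam β, ← hm1def, two_mul, Real.exp_add, Real.exp_log hm1pos, sq]
  have hexp2 : Real.exp (lam (2 * β)) = m2 := by
    have h := hlam (2 * β)
    rw [h, ← hm2def, Real.exp_log hm2pos]
  have hmax : max ((d : ℝ) ^ 2 * Real.exp (2 * lam β)) ((d : ℝ) * Real.exp (lam (2 * β))) = M := by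
    rw [hexp1, hexp2]
  rw [hmax]
  simp only [hVar]
  exact hmain
end
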